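/- arXiv:1205.6748 — 4 statements merged into one kernel-verified Lean document; each statement's English description precedes it below -/
import Mathlib

section
/- Let (W₁,S₁) and (W₂,S₂) be finite Coxeter systems such that (W₂,S₂) is a quasi subsystem of (W₁,S₁). Then for all x, y ∈ W₂, if x ≤₂ y then x ≤₁ y, where ≤ᵢ denotes the Bruhat order of (Wᵢ,Sᵢ). -/
/-- The Bruhat order of a Coxeter system: `x ≤ y` iff some reduced word for `y` contains a
subword which is a reduced word for `x`. -/
def CoxeterSystem.bruhatLE {B W : Type*} [Group W] {M : CoxeterMatrix B}
    (cs : CoxeterSystem M W) (x y : W) : Prop :=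
  ∃ ω : List B, cs.IsReduced ω ∧ cs.wordProd ω = y ∧
    ∃ ω' : List B, ω'.Sublist ω ∧ cs.IsReduced ω' ∧ cs.wordProd ω' = x

/-- `(W₂,S₂)` (realized as a Coxeter system `cs₂` on a subgroup `H` of `W₁`) is a quasi
subsystem of `(W₁,S₁)` (realized as the Coxeter system `cs₁` on `W₁`): for every reduced
expression `w = s₁ ⋯ s_k` in `(W₂,S₂)` one has `ℓ₁(w) = ℓ₁(s₁) + ⋯ + ℓ₁(s_k)`. -/
def IsQuasiSubsystem {B₁ B₂ W₁ : Type*} [Group W₁] {M₁ : CoxeterMatrix B₁}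
    {M₂ : CoxeterMatrix B₂} (cs₁ : CoxeterSystem M₁ W₁) {H : Subgroup W₁}
    (cs₂ : CoxeterSystem M₂ H) : Prop :=
  ∀ ω : List B₂, cs₂.IsReduced ω →
    cs₁.length ((cs₂.wordProd ω : H) : W₁) =
      (ω.map fun i => cs₁.length ((cs₂.simple i : H) : W₁)).sum

private theorem List.Sublist.flatten' {α : Type*} {l₁ l₂ : List (List α)}
    (h : l₁.Sublist l₂) : l₁.flatten.Sublist l₂.flatten := by
  induction h with
  | slnil => simp
  | cons a _ ih =>
    simp only [List.flatten_cons]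
    exact ih.trans (List.sublist_append_right _ _)
  | cons_cons a _ ih =>
    simp only [List.flatten_cons]
    exact ih.append_left a

/-- If `(W₂,S₂)` is a quasi subsystem of `(W₁,S₁)`, then `x ≤₂ y` implies `x ≤₁ y`. -/
theorem quasiSubsystem_bruhatLE_mono {B₁ B₂ W₁ : Type*} [Group W₁] [Finite W₁]
    {M₁ : CoxeterMatrix B₁} {M₂ : CoxeterMatrix B₂}
    (cs₁ : CoxeterSystem M₁ W₁) {H : Subgroup W₁} (cs₂ : CoxeterSystem M₂ H)
    (hq : IsQuasiSubsystem cs₁ cs₂) (x y : H) (hxy : cs₂.bruhatLE x y) :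
    cs₁.bruhatLE (x : W₁) (y : W₁) := by
  classical
  obtain ⟨ω, hω, hωy, ω', hsub, hω', hω'x⟩ := hxy
  -- choose a reduced word in cs₁ for each cs₂-simple reflection
  have hf : ∀ i : B₂, ∃ u : List B₁,
      u.length = cs₁.length ((cs₂.simple i : H) : W₁) ∧
      ((cs₂.simple i : H) : W₁) = cs₁.wordProd u := fun i =>
    (cs₁.exists_isReduced ((cs₂.simple i : H) : W₁)).imp fun _ h => ⟨by rw [h.2]; exact h.1.symm, h.2⟩
  choose f hflen hfprod using hf
  -- the lifted word product
  have prod_eq : ∀ τ : List B₂,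
      cs₁.wordProd ((τ.map f).flatten) = ((cs₂.wordProd τ : H) : W₁) := by
    intro τ
    induction τ with
    | nil => simp
    | cons i τ ih =>
      simp only [List.map_cons, List.flatten_cons, cs₁.wordProd_append, ih,
        cs₂.wordProd_cons, ← hfprod i]
      push_cast
      ring_nf
  have len_eq : ∀ τ : List B₂,
      ((τ.map f).flatten).length = (τ.map fun i => cs₁.length ((cs₂.simple i : H) : W₁)).sum := by
    intro τ
    induction τ with
    | nil => simp
    | cons i τ ih => simp [ih, hflen i]
  have reduced : ∀ τ : List B₂, cs₂.IsReduced τ → cs₁.IsReduced ((τ.map f).flatten) := by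
    intro τ hτ
    unfold CoxeterSystem.IsReduced
    rw [prod_eq τ, len_eq τ, hq τ hτ]
  refine ⟨(ω.map f).flatten, reduced ω hω, by rw [prod_eq, hωy],
    (ω'.map f).flatten, (hsub.map f).flatten', reduced ω' hω', by rw [prod_eq, hω'x]⟩
end

section
/- Let (W₁,S₁) and (W₂,S₂) be finite Coxeter systems such that (W₂,S₂) is a quasi subsystem of (W₁,S₁), and assume the following condition (C): for any x, y ∈ W₂ and s ∈ S₂ such that x ≤₁ y, ℓ₁(sy) < ℓ₁(y), and ℓ₁(x) < ℓ₁(sx), one has sx ≤₁ y. Then for all x, y ∈ W₂, if x ≤₁ y then x ≤₂ y. -/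
namespace QS

open List CoxeterSystem

variable {B W : Type*} [Group W] {M : CoxeterMatrix B} (cs : CoxeterSystem M W)

local prefix:100 "σ" => cs.simple
local prefix:100 "π" => cs.wordProd
local prefix:100 "ℓ" => cs.length

open scoped Classical

/-- The function underlying the parity permutation of a generator. -/
noncomputable def pfun (i : B) : W × ZMod 2 → W × ZMod 2 :=
  fun p => (σ i * p.1 * σ i, p.2 + if p.1 = σ i then 1 else 0)

lemma simple_conj_eq_iff (i : B) (X u : W) :
    (σ i * X * σ i = u) ↔ (X = σ i * u * σ i) := by
  constructor
  · intro h
    have := congrArg (fun z => σ i * z * σ i) h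
    simpa only [← mul_assoc, cs.simple_mul_simple_self, one_mul,
      cs.simple_mul_simple_cancel_right] using this
  · intro h
    rw [h]
    simp only [← mul_assoc, cs.simple_mul_simple_self, one_mul,
      cs.simple_mul_simple_cancel_right]

lemma pfun_involutive (i : B) : Function.Involutive (pfun cs i) := by
  rintro ⟨t, ε⟩
  have h1 : σ i * (σ i * t * σ i) * σ i = t := by
    simp only [← mul_assoc, cs.simple_mul_simple_self, one_mul,
      cs.simple_mul_simple_cancel_right]
  have h2 : (σ i * t * σ i = σ i) ↔ (t = σ i) := by
    rw [simple_conj_eq_iff]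
    simp [cs.simple_mul_simple_cancel_left]
  simp only [pfun, h1, h2]
  by_cases h : t = σ i
  · simp only [h, if_true, if_pos rfl]
    rw [add_assoc, show (1 : ZMod 2) + 1 = 0 from by decide, add_zero]
  · simp [h]

/-- The parity permutation of a generator. -/
noncomputable def pperm (i : B) : Equiv.Perm (W × ZMod 2) := (pfun_involutive cs i).toPerm

lemma pperm_apply (i : B) (t : W) (ε : ZMod 2) :
    pperm cs i (t, ε) = (σ i * t * σ i, ε + if t = σ i then 1 else 0) := rfl

lemma simple_mul_pow (i j : B) (k : ℕ) :
    σ j * (σ i * σ j) ^ k = ((σ i * σ j)⁻¹) ^ k * σ j := by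
  induction k with
  | zero => simp
  | succ k ih =>
    have key : σ j * (σ i * σ j) = (σ i * σ j)⁻¹ * σ j := by
      rw [mul_inv_rev, cs.inv_simple, cs.inv_simple, mul_assoc]
    rw [pow_succ, ← mul_assoc, ih, mul_assoc, key, ← mul_assoc, ← pow_succ, pow_succ',
      mul_assoc]

lemma pperm_liftable : M.IsLiftable (fun i => pperm cs i) := by
  intro i j
  set m := M i j with hm
  set p := σ i * σ j with hp_def
  have hp : p ^ m = 1 := cs.simple_mul_simple_pow i j
  have hinv : σ j * σ i = p⁻¹ := by
    rw [hp_def, mul_inv_rev, cs.inv_simple, cs.inv_simple]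
  have hconj1 : ∀ k : ℕ, (p ^ k)⁻¹ * σ j * p ^ k = (p⁻¹) ^ (2 * k) * σ j := by
    intro k
    rw [mul_assoc, simple_mul_pow cs i j k, ← hp_def, ← mul_assoc, ← inv_pow, ← pow_add,
      two_mul]
  have hconj2 : ∀ k : ℕ,
      (p ^ k)⁻¹ * (p⁻¹ * σ j) * p ^ k = (p⁻¹) ^ (2 * k + 1) * σ j := by
    intro k
    have h0 : (p ^ k)⁻¹ * (p⁻¹ * σ j) * p ^ k = p⁻¹ * ((p ^ k)⁻¹ * σ j * p ^ k) := by
      group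
    rw [h0, hconj1 k, ← mul_assoc, ← pow_succ']
  have key : ∀ (k : ℕ) (t : W) (ε : ZMod 2),
      ((pperm cs i * pperm cs j) ^ k) (t, ε) =
        (p ^ k * t * (p ^ k)⁻¹,
          ε + ∑ n ∈ Finset.range (2 * k),
            (if t = (p⁻¹) ^ n * σ j then (1 : ZMod 2) else 0)) := by
    intro k
    induction k with
    | zero => intro t ε; simp
    | succ k ih =>
      intro t ε
      rw [pow_succ', Equiv.Perm.mul_apply, ih t ε, Equiv.Perm.mul_apply,
        pperm_apply, pperm_apply]
      set A := p ^ k * t * (p ^ k)⁻¹ with hA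
      have hfst : σ i * (σ j * A * σ j) * σ i = p ^ (k+1) * t * (p ^ (k+1))⁻¹ := by
        have h0 : σ i * (σ j * A * σ j) * σ i = p * A * (σ j * σ i) := by
          rw [hp_def]; group
        rw [h0, hinv, hA]
        group
      have hiff1 : (A = σ j) ↔ (t = (p⁻¹) ^ (2 * k) * σ j) := by
        rw [hA]
        constructor
        · intro h
          have : t = (p ^ k)⁻¹ * σ j * p ^ k := by rw [← h]; group
          rw [this, hconj1]
        · intro h
          rw [h, ← hconj1]
          group
      have hiff2 : (σ j * A * σ j = σ i) ↔ (t = (p⁻¹) ^ (2 * k + 1) * σ j) := by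
        rw [simple_conj_eq_iff, hA]
        have hji : σ j * σ i * σ j = p⁻¹ * σ j := by rw [hinv]
        constructor
        · intro h
          have : t = (p ^ k)⁻¹ * (σ j * σ i * σ j) * p ^ k := by rw [← h]; group
          rw [this, hji, hconj2]
        · intro h
          rw [h, ← hconj2, ← hji]
          group
      have h2k : 2 * (k + 1) = (2 * k + 1) + 1 := by ring
      rw [h2k, Finset.sum_range_succ, Finset.sum_range_succ]
      refine Prod.ext hfst ?_
      simp only [hiff1, hiff2]
      ring
  refine Equiv.ext ?_
  rintro ⟨t, ε⟩
  rw [key m t ε, hp]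
  have hpm : (p⁻¹) ^ m = 1 := by rw [inv_pow, hp, inv_one]
  have hsum : ∑ n ∈ Finset.range (2 * m),
      (if t = (p⁻¹) ^ n * σ j then (1 : ZMod 2) else 0) = 0 := by
    rw [two_mul, Finset.sum_range_add, ← Finset.sum_add_distrib]
    have : ∀ n ∈ Finset.range m,
        ((if t = (p⁻¹) ^ n * σ j then (1 : ZMod 2) else 0) +
          (if t = (p⁻¹) ^ (m + n) * σ j then (1 : ZMod 2) else 0)) = 0 := by
      intro n _
      rw [pow_add, hpm, one_mul]
      by_cases h : t = (p⁻¹) ^ n * σ j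
      · rw [if_pos h]; decide
      · rw [if_neg h]; decide
    rw [Finset.sum_congr rfl this, Finset.sum_const_zero]
  rw [hsum]
  simp

/-- The parity representation. -/
noncomputable def prep : W →* Equiv.Perm (W × ZMod 2) :=
  cs.lift ⟨fun i => pperm cs i, pperm_liftable cs⟩

lemma prep_simple (i : B) : prep cs (σ i) = pperm cs i :=
  cs.lift_apply_simple (pperm_liftable cs) i

/-- Indicator sum used to express the parity representation on words. -/
noncomputable def indsum (l : List W) (t : W) : ZMod 2 :=
  (l.map fun r => if r = t then (1 : ZMod 2) else 0).sum

@[simp] lemma indsum_nil (t : W) : indsum ([] : List W) t = 0 := rfl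

lemma indsum_cons (r : W) (l : List W) (t : W) :
    indsum (r :: l) t = (if r = t then (1 : ZMod 2) else 0) + indsum l t := by
  simp [indsum]

lemma indsum_eq_zero_of_not_mem {l : List W} {t : W} (h : t ∉ l) : indsum l t = 0 := by
  induction l with
  | nil => rfl
  | cons r l ih =>
    have hr : ¬ (r = t) := fun e => h (by rw [← e]; exact mem_cons_self)
    rw [indsum_cons, if_neg hr, ih (fun hl => h (mem_cons_of_mem r hl)), add_zero]

lemma prep_wordProd (ω : List B) (t : W) (ε : ZMod 2) :
    prep cs (π ω) (t, ε) =
      ((π ω) * t * (π ω)⁻¹, ε + indsum (cs.rightInvSeq ω) t) := by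
  induction ω generalizing t ε with
  | nil => simp [indsum]
  | cons i ρ ih =>
    rw [cs.wordProd_cons, map_mul, Equiv.Perm.mul_apply, ih, prep_simple, pperm_apply,
      rightInvSeq, indsum_cons]
    have hiff : ((π ρ) * t * (π ρ)⁻¹ = σ i) ↔ ((π ρ)⁻¹ * σ i * (π ρ) = t) := by
      constructor
      · intro h; rw [← h]; group
      · intro h; rw [← h]; group
    refine Prod.ext ?_ ?_
    · show σ i * ((π ρ) * t * (π ρ)⁻¹) * σ i = (σ i * π ρ) * t * (σ i * π ρ)⁻¹
      rw [mul_inv_rev, cs.inv_simple]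
      group
    · show (ε + indsum (cs.rightInvSeq ρ) t) + _ = ε + (_ + indsum (cs.rightInvSeq ρ) t)
      rw [show ((π ρ)⁻¹ * σ i * (π ρ) = t ↔ (π ρ) * t * (π ρ)⁻¹ = σ i) from hiff.symm]
      ring

/-- The parity of the number of occurrences of `t` in inversion sequences of words for `w`. -/
noncomputable def eta (w t : W) : ZMod 2 := (prep cs w (t, 0)).2

lemma prep_apply (w t : W) (ε : ZMod 2) :
    prep cs w (t, ε) = (w * t * w⁻¹, ε + eta cs w t) := by
  obtain ⟨ω, rfl⟩ := cs.wordProd_surjective w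
  unfold eta
  rw [prep_wordProd, prep_wordProd]
  simp

lemma eta_mul (u v t : W) : eta cs (u * v) t = eta cs v t + eta cs u (v * t * v⁻¹) := by
  unfold eta
  rw [map_mul, Equiv.Perm.mul_apply,
    show ((prep cs v) (t, 0)) = (v * t * v⁻¹, 0 + eta cs v t) from prep_apply cs v t 0,
    prep_apply]
  simp [eta, add_comm]

lemma eta_simple (i : B) (t : W) :
    eta cs (σ i) t = if t = σ i then 1 else 0 := by
  unfold eta
  rw [prep_simple, pperm_apply]
  simp

lemma eta_reflection_self {t : W} (ht : cs.IsReflection t) : eta cs t t = 1 := by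
  obtain ⟨u, i, rfl⟩ := ht
  set t := u * σ i * u⁻¹ with htdef
  have h1 : eta cs (u * u⁻¹) t = eta cs u⁻¹ t + eta cs u (u⁻¹ * t * u) := by
    rw [eta_mul cs u u⁻¹ t]; simp [inv_inv]
  rw [mul_inv_cancel] at h1
  have h0 : eta cs 1 t = 0 := by rw [eta, map_one]; rfl
  have hiu : u⁻¹ * t * u = σ i := by rw [htdef]; group
  rw [h0, hiu] at h1
  have h2 : eta cs ((u * σ i) * u⁻¹) t = eta cs u⁻¹ t + eta cs (u * σ i) (u⁻¹ * t * u) := by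
    rw [eta_mul cs (u * σ i) u⁻¹ t]
    simp [inv_inv]
  rw [hiu] at h2
  have h3 : eta cs (u * σ i) (σ i) = eta cs (σ i) (σ i) + eta cs u (σ i * σ i * (σ i)⁻¹) :=
    eta_mul cs u (σ i) (σ i)
  have h4 : σ i * σ i * (σ i)⁻¹ = σ i := by group
  rw [h4, eta_simple, if_pos rfl] at h3
  rw [← htdef] at h2
  have hsum : eta cs u⁻¹ t + eta cs u (σ i) = 0 := h1.symm
  calc eta cs t t = eta cs u⁻¹ t + (1 + eta cs u (σ i)) := by rw [h2, h3]
    _ = (eta cs u⁻¹ t + eta cs u (σ i)) + 1 := by ring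
    _ = 1 := by rw [hsum, zero_add]

lemma eta_eq_zero_of_length_lt :
    ∀ n (w t : W), cs.IsReflection t → ℓ w ≤ n → ℓ w < ℓ (w * t) → eta cs w t = 0 := by
  intro n
  induction n with
  | zero =>
    intro w t ht hle _
    have hw : w = 1 := by rwa [Nat.le_zero, cs.length_eq_zero_iff] at hle
    subst hw
    rw [show eta cs 1 t = (prep cs 1 (t, 0)).2 from rfl, map_one]
    rfl
  | succ n ih =>
    intro w t ht hle hlt
    by_cases hn : ℓ w ≤ n
    · exact ih w t ht hn hlt
    have hw1 : w ≠ 1 := by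
      intro h
      subst h
      simp at hn
    obtain ⟨i, hi⟩ := cs.exists_rightDescent_of_ne_one hw1
    have hi' : ℓ (w * σ i) < ℓ w := hi
    have htne : t ≠ σ i := by
      intro h
      subst h
      omega
    set w' := w * σ i with hw'
    have hwdec : w = w' * σ i := by rw [hw', cs.simple_mul_simple_cancel_right]
    have hconj : cs.IsReflection (σ i * t * σ i) := by
      have := CoxeterSystem.IsReflection.conj ht (σ i)
      rwa [cs.inv_simple] at this
    have hlen : ℓ w' < ℓ (w' * (σ i * t * σ i)) := by
      have h1 : w' * (σ i * t * σ i) = w * t * σ i := by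
        rw [hwdec]
        group
      have h2 : ℓ (w * t * σ i) + 1 ≥ ℓ (w * t) := by
        rcases cs.length_mul_simple (w * t) i with h | h <;> omega
      rw [h1]
      omega
    have heta := eta_mul cs w' (σ i) t
    rw [← hwdec] at heta
    rw [heta, eta_simple, if_neg htne, zero_add, cs.inv_simple]
    exact ih w' _ hconj (by omega) hlen

lemma eta_eq_one_of_isRightInversion {w t : W} (ht : cs.IsRightInversion w t) :
    eta cs w t = 1 := by
  obtain ⟨htr, hlt⟩ := ht
  set w' := w * t with hw'
  have hwdec : w = w' * t := by
    rw [hw', mul_assoc, CoxeterSystem.IsReflection.mul_self htr, mul_one]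
  have h0 : eta cs w' t = 0 := by
    apply eta_eq_zero_of_length_lt cs (ℓ w') w' t htr le_rfl
    rw [← hwdec]
    exact hlt
  have heta := eta_mul cs w' t t
  rw [← hwdec] at heta
  rw [heta, eta_reflection_self cs htr,
    show t * t * t⁻¹ = t from by
      rw [CoxeterSystem.IsReflection.mul_self htr, one_mul, CoxeterSystem.IsReflection.inv htr],
    h0, add_zero]

theorem mem_rightInvSeq_of_isRightInversion (ω : List B) {t : W}
    (ht : cs.IsRightInversion (π ω) t) : t ∈ cs.rightInvSeq ω := by
  by_contra hmem
  have h0 : indsum (cs.rightInvSeq ω) t = 0 := indsum_eq_zero_of_not_mem hmem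
  have h1 : eta cs (π ω) t = indsum (cs.rightInvSeq ω) t := by
    unfold eta
    rw [prep_wordProd]
    simp
  rw [eta_eq_one_of_isRightInversion cs ht, h0] at h1
  exact one_ne_zero h1

theorem exists_eraseIdx_of_isRightInversion (ω : List B) {t : W}
    (ht : cs.IsRightInversion (π ω) t) :
    ∃ j, j < ω.length ∧ π ω * t = π (ω.eraseIdx j) := by
  have hmem := mem_rightInvSeq_of_isRightInversion cs ω ht
  obtain ⟨j, hj, hgt⟩ := List.mem_iff_getElem.mp hmem
  rw [cs.length_rightInvSeq] at hj
  refine ⟨j, hj, ?_⟩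
  have hgd : (cs.rightInvSeq ω).getD j 1 = t := by
    rw [List.getD_eq_getElem _ _ (by rwa [cs.length_rightInvSeq])]
    exact hgt
  rw [← hgd, cs.wordProd_mul_getD_rightInvSeq]

theorem exists_reduced_sublist :
    ∀ n (ω : List B), ω.length ≤ n → ∃ τ, τ <+ ω ∧ cs.IsReduced τ ∧ π τ = π ω := by
  intro n
  induction n with
  | zero =>
    intro ω h
    have hω : ω = [] := List.eq_nil_of_length_eq_zero (Nat.le_zero.mp h)
    subst hω
    exact ⟨[], List.Sublist.refl _, by simp [CoxeterSystem.IsReduced], rfl⟩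
  | succ n ih =>
    intro ω hlen
    by_cases hred : cs.IsReduced ω
    · exact ⟨ω, List.Sublist.refl _, hred, rfl⟩
    have hω : ω ≠ [] := by
      intro h
      subst h
      exact hred (by simp [CoxeterSystem.IsReduced])
    have hωlen : 1 ≤ ω.length := List.length_pos_iff.mpr hω
    have hPtop : ¬ cs.IsReduced (ω.take (ω.length - 1 + 1)) := by
      rw [show ω.length - 1 + 1 = ω.length from by omega, List.take_length]
      exact hred
    have hex : ∃ k, ¬ cs.IsReduced (ω.take (k+1)) := ⟨ω.length - 1, hPtop⟩
    set k := Nat.find hex with hkdef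
    have hk : ¬ cs.IsReduced (ω.take (k+1)) := Nat.find_spec hex
    have hmin : ∀ k' , k' < k → cs.IsReduced (ω.take (k'+1)) := by
      intro k' h'
      by_contra hc
      exact Nat.find_min hex h' hc
    have htk : cs.IsReduced (ω.take k) := by
      rcases Nat.eq_zero_or_pos k with h0 | h0
      · rw [h0]
        simp [CoxeterSystem.IsReduced]
      · have := hmin (k-1) (by omega)
        rwa [show k - 1 + 1 = k from by omega] at this
    have hklt : k < ω.length := by
      have := Nat.find_le (h := hex) hPtop
      omega
    have htake : ω.take (k+1) = ω.take k ++ [ω[k]] := by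
      rw [List.take_succ]
      congr 1
      rw [List.getElem?_eq_getElem hklt]
      rfl
    have hu : ℓ (π (ω.take k)) = k := by
      have := htk
      unfold CoxeterSystem.IsReduced at this
      rwa [List.length_take, min_eq_left (le_of_lt hklt)] at this
    have hprod : π (ω.take (k+1)) = π (ω.take k) * σ (ω[k]) := by
      rw [htake, cs.wordProd_append, cs.wordProd_singleton]
    have hlt2 : ℓ (π (ω.take k) * σ (ω[k])) < ℓ (π (ω.take k)) := by
      have hle : ℓ (π (ω.take k) * σ (ω[k])) ≤ k + 1 := by
        rw [← hprod]
        have := cs.length_wordProd_le (ω.take (k+1))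
        rwa [List.length_take, min_eq_left (by omega : k + 1 ≤ ω.length)] at this
      have hne : ℓ (π (ω.take k) * σ (ω[k])) ≠ k + 1 := by
        intro h
        apply hk
        unfold CoxeterSystem.IsReduced
        rw [hprod, h, List.length_take, min_eq_left (by omega : k + 1 ≤ ω.length)]
      have hne2 := cs.length_mul_simple_ne (π (ω.take k)) (ω[k])
      omega
    obtain ⟨j, hj, hjer⟩ := exists_eraseIdx_of_isRightInversion cs (ω.take k)
      ⟨cs.isReflection_simple (ω[k]), hlt2⟩
    rw [List.length_take, min_eq_left (le_of_lt hklt)] at hj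
    set ω₂ := (ω.take k).eraseIdx j ++ ω.drop (k+1) with hω₂
    have hπ : π ω₂ = π ω := by
      conv_rhs => rw [← List.take_append_drop (k+1) ω]
      rw [hω₂, cs.wordProd_append, cs.wordProd_append, ← hjer, ← hprod]
    have hsub : ω₂ <+ ω := by
      have h1 : (ω.take k).eraseIdx j <+ ω.take (k+1) := by
        refine List.Sublist.trans (List.eraseIdx_sublist _ j) ?_
        rw [htake]
        exact List.sublist_append_left _ _
      have := List.Sublist.append h1 (List.Sublist.refl (ω.drop (k+1)))
      rwa [List.take_append_drop] at this
    have hlen₂ : ω₂.length ≤ n := by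
      have he : ((ω.take k).eraseIdx j).length + 1 = k := by
        have := List.length_eraseIdx_add_one
          (show j < (ω.take k).length from by rwa [List.length_take, min_eq_left (le_of_lt hklt)])
        rwa [List.length_take, min_eq_left (le_of_lt hklt)] at this
      rw [hω₂, List.length_append, List.length_drop]
      omega
    obtain ⟨τ, hτsub, hτred, hτπ⟩ := ih ω₂ hlen₂
    exact ⟨τ, hτsub.trans hsub, hτred, by rw [hτπ, hπ]⟩

/-- Chain version of the Bruhat order: reflexive-transitive closure of
multiplying on the right by a reflection that increases length. -/
def rle (x y : W) : Prop :=
  Relation.ReflTransGen (fun a b => ∃ t, cs.IsReflection t ∧ b = a * t ∧ ℓ a < ℓ b) x y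

lemma rle_refl (x : W) : rle cs x x := Relation.ReflTransGen.refl

lemma rle_trans {x y z : W} (h1 : rle cs x y) (h2 : rle cs y z) : rle cs x z :=
  Relation.ReflTransGen.trans h1 h2

lemma rle_length_le {x y : W} (h : rle cs x y) : ℓ x ≤ ℓ y := by
  induction h with
  | refl => exact le_rfl
  | tail _ ht ih =>
    obtain ⟨t, _, _, hlt⟩ := ht
    omega

theorem rle_exists_sublist :
    ∀ n (x y : W), rle cs x y → ℓ y ≤ n → ∀ ω, cs.IsReduced ω → π ω = y →
      ∃ τ, τ <+ ω ∧ cs.IsReduced τ ∧ π τ = x := by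
  intro n
  induction n with
  | zero =>
    intro x y hxy hy ω hred hπ
    have hy1 : y = 1 := by
      rw [← cs.length_eq_zero_iff]
      omega
    have hx1 : x = 1 := by
      have := rle_length_le cs hxy
      rw [← cs.length_eq_zero_iff]
      omega
    exact ⟨[], List.nil_sublist _, by simp [CoxeterSystem.IsReduced], by rw [hx1]; rfl⟩
  | succ n ih =>
    intro x y hxy hy ω hred hπ
    rcases Relation.ReflTransGen.cases_tail hxy with rfl | ⟨z, hxz, t, htr, rfl, hlt⟩
    · exact ⟨ω, List.Sublist.refl _, hred, hπ⟩
    · -- y = z * t, ℓ z < ℓ (z * t)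
      have hzt : π ω * t = z := by
        rw [hπ, mul_assoc, CoxeterSystem.IsReflection.mul_self htr, mul_one]
      have hinv : cs.IsRightInversion (π ω) t := by
        refine ⟨htr, ?_⟩
        rw [hzt, hπ]
        exact hlt
      obtain ⟨j, hj, hjer⟩ := exists_eraseIdx_of_isRightInversion cs ω hinv
      rw [hzt] at hjer
      obtain ⟨ζ, hζsub, hζred, hζπ⟩ :=
        exists_reduced_sublist cs (ω.eraseIdx j).length (ω.eraseIdx j) le_rfl
      have hz : ℓ z ≤ n := by
        have := hlt
        omega
      obtain ⟨τ, hτsub, hτred, hτπ⟩ := ih x z hxz hz ζ hζred (by rw [hζπ, ← hjer])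
      exact ⟨τ, (hτsub.trans hζsub).trans (List.eraseIdx_sublist ω j), hτred, hτπ⟩

theorem bruhat_triple :
    ∀ n,
      (∀ (ω τ : List B), cs.IsReduced ω → ω.length ≤ n → τ <+ ω → cs.IsReduced τ →
        rle cs (π τ) (π ω)) ∧
      (∀ (u v : W) (i : B), rle cs u v → ℓ v ≤ n → ℓ u < ℓ (u * σ i) → ℓ v < ℓ (v * σ i) →
        rle cs (u * σ i) (v * σ i)) ∧
      (∀ (u w : W) (i : B), rle cs u w → ℓ w ≤ n → ℓ (w * σ i) < ℓ w →
        rle cs u (w * σ i) ∨ (ℓ (u * σ i) < ℓ u ∧ rle cs (u * σ i) (w * σ i))) := by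
  intro n
  induction n with
  | zero =>
    refine ⟨?_, ?_, ?_⟩
    · intro ω τ hω hlen hsub hτ
      have : ω = [] := List.eq_nil_of_length_eq_zero (Nat.le_zero.mp hlen)
      subst this
      have : τ = [] := List.sublist_nil.mp hsub
      subst this
      exact rle_refl cs _
    · intro u v i huv hv _ _
      have hv1 : v = 1 := by
        rw [← cs.length_eq_zero_iff]
        omega
      have hu1 : u = 1 := by
        have := rle_length_le cs huv
        rw [← cs.length_eq_zero_iff]
        omega
      rw [hu1, hv1]
      exact rle_refl cs _
    · intro u w i huw hw hlt
      exfalso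
      have h1 : w = 1 := by
        rw [← cs.length_eq_zero_iff]
        omega
      subst h1
      simp at hlt
  | succ n ih =>
    obtain ⟨ihDir, ihUp, ihZ⟩ := ih
    -- UpLift at n+1
    have hUp : ∀ (u v : W) (i : B), rle cs u v → ℓ v ≤ n + 1 → ℓ u < ℓ (u * σ i) →
        ℓ v < ℓ (v * σ i) → rle cs (u * σ i) (v * σ i) := by
      intro u v i huv hv hua hva
      rcases Relation.ReflTransGen.cases_tail huv with rfl | ⟨z, huz, t, htr, rfl, hlt⟩
      · exact rle_refl cs _
      · have hz : ℓ z ≤ n := by omega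
        have hznei := cs.length_mul_simple_ne z i
        rcases lt_or_gt_of_ne hznei with hzdes | hzasc
        · -- descent of z: use Z property at z
          rcases ihZ u z i huz hz hzdes with h1 | ⟨h2, _⟩
          · -- u ≤ z * σ i ; apply UpLift at z * σ i
            have h3 : ℓ (z * σ i) ≤ n := by omega
            have h4 : ℓ (z * σ i) < ℓ (z * σ i * σ i) := by
              rw [cs.simple_mul_simple_cancel_right]
              exact hzdes
            have h5 := ihUp u (z * σ i) i h1 h3 hua h4
            rw [cs.simple_mul_simple_cancel_right] at h5
            -- now z rle (z*t) rle (z*t*σ i)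
            refine rle_trans cs h5 ?_
            refine Relation.ReflTransGen.trans
              (Relation.ReflTransGen.single ⟨t, htr, rfl, hlt⟩) ?_
            exact Relation.ReflTransGen.single ⟨σ i, cs.isReflection_simple i, rfl, hva⟩
          · omega
        · -- ascent of z: recurse UpLift at z, then edge
          have h5 := ihUp u z i huz hz hua hzasc
          refine rle_trans cs h5 (Relation.ReflTransGen.single ?_)
          refine ⟨σ i * t * σ i, ?_, ?_, ?_⟩
          · have := CoxeterSystem.IsReflection.conj htr (σ i)
            rwa [cs.inv_simple] at this
          · have : z * σ i * (σ i * t * σ i) = z * (σ i * σ i) * t * σ i := by group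
            rw [this, cs.simple_mul_simple_self, mul_one]
          · have h6 := cs.length_mul_simple z i
            omega
    -- Dir1 at n+1
    have hDir : ∀ (ω τ : List B), cs.IsReduced ω → ω.length ≤ n + 1 → τ <+ ω →
        cs.IsReduced τ → rle cs (π τ) (π ω) := by
      intro ω τ hω hlen hsub hτ
      rcases List.eq_nil_or_concat' ω with rfl | ⟨ω₀, b, rfl⟩
      · have : τ = [] := List.sublist_nil.mp hsub
        subst this
        exact rle_refl cs _
      · -- ω = ω₀ ++ [b]
        have hω₀ : cs.IsReduced ω₀ := by
          have := CoxeterSystem.IsReduced.take hω ω₀.length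
          rwa [List.take_left] at this
        have hω₀len : ω₀.length ≤ n := by
          rw [List.length_append, List.length_singleton] at hlen
          omega
        have hπω : π (ω₀ ++ [b]) = π ω₀ * σ b := by
          rw [cs.wordProd_append, cs.wordProd_singleton]
        have hℓω : ℓ (π (ω₀ ++ [b])) = ω₀.length + 1 := by
          have := hω
          unfold CoxeterSystem.IsReduced at this
          rwa [List.length_append, List.length_singleton] at this
        have hℓω₀ : ℓ (π ω₀) = ω₀.length := hω₀
        obtain ⟨τ₁, τ₂, rfl, hτ₁, hτ₂⟩ := List.sublist_append_iff.mp hsub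
        rcases List.sublist_cons_iff.mp hτ₂ with h2 | ⟨r, rfl, hr⟩
        · -- τ₂ <+ [] so τ₂ = []
          have : τ₂ = [] := List.sublist_nil.mp h2
          subst this
          rw [List.append_nil] at hτ ⊢
          refine rle_trans cs (ihDir ω₀ τ₁ hω₀ hω₀len hτ₁ hτ) ?_
          refine Relation.ReflTransGen.single ⟨σ b, cs.isReflection_simple b, hπω, ?_⟩
          omega
        · -- τ₂ = b :: r with r <+ []
          have : r = [] := List.sublist_nil.mp hr
          subst this
          have hτ₁red : cs.IsReduced τ₁ := by
            have := CoxeterSystem.IsReduced.take hτ τ₁.length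
            rwa [List.take_left] at this
          have hπτ : π (τ₁ ++ [b]) = π τ₁ * σ b := by
            rw [cs.wordProd_append, cs.wordProd_singleton]
          have hℓτ : ℓ (π (τ₁ ++ [b])) = τ₁.length + 1 := by
            have := hτ
            unfold CoxeterSystem.IsReduced at this
            rwa [List.length_append, List.length_singleton] at this
          have hℓτ₁ : ℓ (π τ₁) = τ₁.length := hτ₁red
          have h5 := hUp (π τ₁) (π ω₀) b (ihDir ω₀ τ₁ hω₀ hω₀len hτ₁ hτ₁red)
            (by omega) (by rw [← hπτ] at *; omega) (by rw [← hπω] at *; omega)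
          rw [← hπτ, ← hπω] at h5
          exact h5
    refine ⟨hDir, ?_, ?_⟩
    · -- UpLift...
      intro u v i huv hv hua hva
      exact hUp u v i huv hv hua hva
    · -- Z at n+1
      intro u w i huw hw hdes
      obtain ⟨ρ, hρred, hρπ⟩ := cs.exists_reduced_word' (w * σ i)
      have hℓρ : ρ.length = ℓ (w * σ i) := by
        have := hρred
        unfold CoxeterSystem.IsReduced at this
        rw [← hρπ] at this
        omega
      have hωred : cs.IsReduced (ρ ++ [i]) := by
        unfold CoxeterSystem.IsReduced
        rw [cs.wordProd_append, cs.wordProd_singleton, ← hρπ,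
          cs.simple_mul_simple_cancel_right, List.length_append, List.length_singleton]
        have := cs.length_mul_simple w i
        omega
      have hωπ : π (ρ ++ [i]) = w := by
        rw [cs.wordProd_append, cs.wordProd_singleton, ← hρπ,
          cs.simple_mul_simple_cancel_right]
      obtain ⟨τ, hτsub, hτred, hτπ⟩ := rle_exists_sublist cs (ℓ w) u w huw le_rfl
        (ρ ++ [i]) hωred hωπ
      obtain ⟨τ₁, τ₂, rfl, hτ₁, hτ₂⟩ := List.sublist_append_iff.mp hτsub
      have hρlen : ρ.length ≤ n := by omega
      rcases List.sublist_cons_iff.mp hτ₂ with h2 | ⟨r, rfl, hr⟩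
      · have : τ₂ = [] := List.sublist_nil.mp h2
        subst this
        rw [List.append_nil] at hτred hτπ
        left
        have := ihDir ρ τ₁ hρred hρlen hτ₁ hτred
        rwa [hτπ, ← hρπ] at this
      · have : r = [] := List.sublist_nil.mp hr
        subst this
        right
        have hτ₁red : cs.IsReduced τ₁ := by
          have := CoxeterSystem.IsReduced.take hτred τ₁.length
          rwa [List.take_left] at this
        have husi : u * σ i = π τ₁ := by
          rw [← hτπ, cs.wordProd_append, cs.wordProd_singleton,
            cs.simple_mul_simple_cancel_right]
        have hℓτ : ℓ (π (τ₁ ++ [i])) = τ₁.length + 1 := by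
          have := hτred
          unfold CoxeterSystem.IsReduced at this
          rwa [List.length_append, List.length_singleton] at this
        have hℓu : ℓ u = τ₁.length + 1 := by rw [← hτπ]; exact hℓτ
        have hℓusi : ℓ (u * σ i) = τ₁.length := by
          rw [husi]
          exact hτ₁red
        constructor
        · omega
        · have := ihDir ρ τ₁ hρred hρlen hτ₁ hτ₁red
          rwa [← husi, ← hρπ] at this

lemma bruhatLE_refl (x : W) : cs.bruhatLE x x := by
  obtain ⟨ω, hred, hπ⟩ := cs.exists_reduced_word' x
  exact ⟨ω, hred, hπ.symm, ω, List.Sublist.refl _, hred, hπ.symm⟩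

lemma rle_of_bruhatLE {x y : W} (h : cs.bruhatLE x y) : rle cs x y := by
  obtain ⟨ω, hred, hπ, τ, hsub, hτred, hτπ⟩ := h
  have := (bruhat_triple cs ω.length).1 ω τ hred le_rfl hsub hτred
  rwa [hπ, hτπ] at this

lemma bruhatLE_of_rle {x y : W} (h : rle cs x y) : cs.bruhatLE x y := by
  obtain ⟨ω, hred, hπ⟩ := cs.exists_reduced_word' y
  obtain ⟨τ, hsub, hτred, hτπ⟩ :=
    rle_exists_sublist cs (ℓ y) x y h le_rfl ω hred hπ.symm
  exact ⟨ω, hred, hπ.symm, τ, hsub, hτred, hτπ⟩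

lemma bruhatLE_length_le {x y : W} (h : cs.bruhatLE x y) : ℓ x ≤ ℓ y := by
  obtain ⟨ω, hred, hπ, τ, hsub, hτred, hτπ⟩ := h
  have h1 : ℓ x = τ.length := by rw [← hτπ]; exact hτred
  have h2 : ℓ y = ω.length := by rw [← hπ]; exact hred
  have := hsub.length_le
  omega

lemma bruhatLE_length_lt {x y : W} (h : cs.bruhatLE x y) (hne : x ≠ y) : ℓ x < ℓ y := by
  obtain ⟨ω, hred, hπ, τ, hsub, hτred, hτπ⟩ := h
  have h1 : ℓ x = τ.length := by rw [← hτπ]; exact hτred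
  have h2 : ℓ y = ω.length := by rw [← hπ]; exact hred
  have hle := hsub.length_le
  rcases Nat.lt_or_ge τ.length ω.length with hlt | hge
  · omega
  · exfalso
    have : τ = ω := hsub.eq_of_length (by omega)
    subst this
    rw [hτπ] at hπ
    exact hne hπ

/-- Right lifting property (both descents) for the Bruhat order. -/
lemma bruhatLE_mul_simple_right {x y : W} (i : B) (h : cs.bruhatLE x y)
    (hy : ℓ (y * σ i) < ℓ y) (hx : ℓ (x * σ i) < ℓ x) :
    cs.bruhatLE (x * σ i) (y * σ i) := by
  apply bruhatLE_of_rle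
  have hrle := rle_of_bruhatLE cs h
  rcases (bruhat_triple cs (ℓ y)).2.2 x y i hrle le_rfl hy with h1 | ⟨_, h2⟩
  · refine rle_trans cs (Relation.ReflTransGen.single ?_) h1
    refine ⟨σ i, cs.isReflection_simple i, ?_, hx⟩
    rw [cs.simple_mul_simple_cancel_right]
  · exact h2

lemma bruhatLE_inv {x y : W} (h : cs.bruhatLE x y) : cs.bruhatLE x⁻¹ y⁻¹ := by
  obtain ⟨ω, hred, hπ, τ, hsub, hτred, hτπ⟩ := h
  refine ⟨ω.reverse, (cs.isReduced_reverse_iff ω).mpr hred, by rw [cs.wordProd_reverse, hπ],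
    τ.reverse, hsub.reverse, (cs.isReduced_reverse_iff τ).mpr hτred,
    by rw [cs.wordProd_reverse, hτπ]⟩

/-- Left lifting property (both descents) for the Bruhat order. -/
lemma bruhatLE_simple_mul_left {x y : W} (i : B) (h : cs.bruhatLE x y)
    (hy : ℓ (σ i * y) < ℓ y) (hx : ℓ (σ i * x) < ℓ x) :
    cs.bruhatLE (σ i * x) (σ i * y) := by
  have h1 := bruhatLE_inv cs h
  have h2 : ℓ (x⁻¹ * σ i) < ℓ x⁻¹ := by
    rw [cs.length_inv]
    rw [show x⁻¹ * σ i = (σ i * x)⁻¹ from by rw [mul_inv_rev, cs.inv_simple], cs.length_inv]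
    exact hx
  have h3 : ℓ (y⁻¹ * σ i) < ℓ y⁻¹ := by
    rw [cs.length_inv]
    rw [show y⁻¹ * σ i = (σ i * y)⁻¹ from by rw [mul_inv_rev, cs.inv_simple], cs.length_inv]
    exact hy
  have h4 := bruhatLE_mul_simple_right cs i h1 h3 h2
  have h5 := bruhatLE_inv cs h4
  rwa [mul_inv_rev, mul_inv_rev, cs.inv_simple, inv_inv, inv_inv] at h5

/-- If `v ≤ y` and left multiplication by a simple reflection shortens `v`,
then `σ i * v ≤ y`. -/
lemma bruhatLE_simple_mul_of_lt {v y : W} (i : B) (h : cs.bruhatLE v y)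
    (hd : ℓ (σ i * v) < ℓ v) : cs.bruhatLE (σ i * v) y := by
  obtain ⟨ω, hred, hπ, τ, hsub, hτred, hτπ⟩ := h
  -- left exchange on τ
  have hinv : cs.IsRightInversion (π τ.reverse) (σ i) := by
    refine ⟨cs.isReflection_simple i, ?_⟩
    rw [cs.wordProd_reverse, hτπ]
    rw [show v⁻¹ * σ i = (σ i * v)⁻¹ from by rw [mul_inv_rev, cs.inv_simple], cs.length_inv,
      cs.length_inv]
    exact hd
  obtain ⟨j, hj, hjer⟩ := exists_eraseIdx_of_isRightInversion cs τ.reverse hinv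
  set τ' := (τ.reverse.eraseIdx j).reverse with hτ'
  have hτ'π : π τ' = σ i * v := by
    rw [hτ', cs.wordProd_reverse, ← hjer, cs.wordProd_reverse, hτπ, mul_inv_rev, inv_inv,
      cs.inv_simple]
  have hτ'sub : τ' <+ τ := by
    have := (List.eraseIdx_sublist τ.reverse j).reverse
    rwa [List.reverse_reverse] at this
  have hτ'len : τ'.length + 1 = τ.length := by
    rw [hτ', List.length_reverse]
    have := List.length_eraseIdx_add_one hj
    rwa [List.length_reverse] at this
  have hτ'red : cs.IsReduced τ' := by
    unfold CoxeterSystem.IsReduced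
    rw [hτ'π]
    have hv : ℓ v = τ.length := by rw [← hτπ]; exact hτred
    have := cs.length_simple_mul v i
    omega
  exact ⟨ω, hred, hπ, τ', hτ'sub.trans hsub, hτ'red, hτ'π⟩

/-- Multi-step left lifting along a word: if `π α` shortens both `u` and `v` additively,
Bruhat comparability is preserved. -/
lemma bruhatLE_chain (α : List B) :
    ∀ (u v : W), cs.bruhatLE u v →
      ℓ (π α * u) + α.length = ℓ u → ℓ (π α * v) + α.length = ℓ v →
      cs.bruhatLE (π α * u) (π α * v) := by
  induction α with
  | nil =>
    intro u v h _ _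
    simpa using h
  | cons a α' ih =>
    intro u v h hu hv
    have hπ : π (a :: α') = σ a * π α' := cs.wordProd_cons a α'
    have hword : ℓ (π α') ≤ α'.length := cs.length_wordProd_le α'
    have hu1 : ℓ (π α' * u) ≥ ℓ u - ℓ (π α') := cs.length_mul_ge_length_sub_length' _ _
    have hu2 : ℓ (σ a * (π α' * u)) ≥ ℓ (π α' * u) - 1 := by
      have := cs.length_simple_mul (π α' * u) a
      omega
    have hu3 : σ a * (π α' * u) = π (a :: α') * u := by rw [hπ, mul_assoc]
    have hu4 : ℓ (π α' * u) + α'.length = ℓ u := by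
      rw [List.length_cons] at hu
      rw [← hu3] at hu
      omega
    have hv1 : ℓ (π α' * v) ≥ ℓ v - ℓ (π α') := cs.length_mul_ge_length_sub_length' _ _
    have hv2 : ℓ (σ a * (π α' * v)) ≥ ℓ (π α' * v) - 1 := by
      have := cs.length_simple_mul (π α' * v) a
      omega
    have hv3 : σ a * (π α' * v) = π (a :: α') * v := by rw [hπ, mul_assoc]
    have hv4 : ℓ (π α' * v) + α'.length = ℓ v := by
      rw [List.length_cons] at hv
      rw [← hv3] at hv
      omega
    have ih2 := ih u v h hu4 hv4
    have hdu : ℓ (σ a * (π α' * u)) < ℓ (π α' * u) := by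
      rw [List.length_cons] at hu
      rw [← hu3] at hu
      omega
    have hdv : ℓ (σ a * (π α' * v)) < ℓ (π α' * v) := by
      rw [List.length_cons] at hv
      rw [← hv3] at hv
      omega
    have := bruhatLE_simple_mul_left cs a ih2 hdv hdu
    rwa [hu3, hv3] at this

/-- Prepending a simple reflection that lengthens both sides preserves Bruhat order. -/
lemma bruhatLE_simple_mul_mul {u v : W} (i : B) (h : cs.bruhatLE u v)
    (hu : ℓ u < ℓ (σ i * u)) (hv : ℓ v < ℓ (σ i * v)) :
    cs.bruhatLE (σ i * u) (σ i * v) := by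
  obtain ⟨ω, hred, hπ, τ, hsub, hτred, hτπ⟩ := h
  have hωlen : ℓ v = ω.length := by rw [← hπ]; exact hred
  have hτlen : ℓ u = τ.length := by rw [← hτπ]; exact hτred
  have hvs := cs.length_simple_mul v i
  have hus := cs.length_simple_mul u i
  refine ⟨i :: ω, ?_, ?_, i :: τ, hsub.cons₂ i, ?_, ?_⟩
  · unfold CoxeterSystem.IsReduced
    rw [cs.wordProd_cons, hπ, List.length_cons]
    omega
  · rw [cs.wordProd_cons, hπ]
  · unfold CoxeterSystem.IsReduced
    rw [cs.wordProd_cons, hτπ, List.length_cons]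
    omega
  · rw [cs.wordProd_cons, hτπ]

end QS

namespace QS

variable {B₁ B₂ W₁ : Type*} [Group W₁] {M₁ : CoxeterMatrix B₁} {M₂ : CoxeterMatrix B₂}
  (cs₁ : CoxeterSystem M₁ W₁) {H : Subgroup W₁} (cs₂ : CoxeterSystem M₂ H)

lemma simple_length_pos (i : B₂) : 1 ≤ cs₁.length ((cs₂.simple i : H) : W₁) := by
  have h1 : (cs₂.simple i : H) ≠ 1 := by
    intro h
    have h2 := cs₂.length_simple i
    rw [h, cs₂.length_one] at h2
    exact one_ne_zero h2.symm
  have h2 : ((cs₂.simple i : H) : W₁) ≠ 1 := by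
    intro h
    exact h1 (Subtype.ext (by rwa [OneMemClass.coe_one]))
  have h3 : cs₁.length ((cs₂.simple i : H) : W₁) ≠ 0 := by
    intro h
    exact h2 (cs₁.length_eq_zero_iff.mp h)
  omega

lemma quasi_add (hq : IsQuasiSubsystem cs₁ cs₂) (x : H) (i : B₂)
    (h : cs₂.length (cs₂.simple i * x) < cs₂.length x) :
    cs₁.length ((cs₂.simple i : H) : W₁) + cs₁.length ((cs₂.simple i * x : H) : W₁)
      = cs₁.length (x : W₁) := by
  obtain ⟨ρ, hρred, hρπ⟩ := cs₂.exists_reduced_word' (cs₂.simple i * x)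
  have hρlen : ρ.length = cs₂.length (cs₂.simple i * x) := by
    have h1 := hρred
    unfold CoxeterSystem.IsReduced at h1
    rw [← hρπ] at h1
    omega
  have hcons_π : cs₂.wordProd (i :: ρ) = x := by
    rw [cs₂.wordProd_cons, ← hρπ, cs₂.simple_mul_simple_cancel_left]
  have hcons_red : cs₂.IsReduced (i :: ρ) := by
    unfold CoxeterSystem.IsReduced
    rw [hcons_π, List.length_cons]
    have := cs₂.length_simple_mul x i
    omega
  have h1 := hq (i :: ρ) hcons_red
  have h2 := hq ρ hρred
  rw [hcons_π] at h1
  rw [← hρπ] at h2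
  rw [List.map_cons, List.sum_cons] at h1
  rw [h1, h2]

lemma quasi_add' (hq : IsQuasiSubsystem cs₁ cs₂) (x : H) (i : B₂)
    (h : cs₂.length x < cs₂.length (cs₂.simple i * x)) :
    cs₁.length ((cs₂.simple i : H) : W₁) + cs₁.length (x : W₁)
      = cs₁.length ((cs₂.simple i * x : H) : W₁) := by
  have h2 : cs₂.length (cs₂.simple i * (cs₂.simple i * x)) < cs₂.length (cs₂.simple i * x) := by
    rw [cs₂.simple_mul_simple_cancel_left]
    exact h
  have h3 := quasi_add cs₁ cs₂ hq (cs₂.simple i * x) i h2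
  rwa [cs₂.simple_mul_simple_cancel_left] at h3

end QS

/-- If `(W₂,S₂)` is a quasi subsystem of `(W₁,S₁)` satisfying condition (C), then
`x ≤₁ y` implies `x ≤₂ y` for all `x, y ∈ W₂`. -/
theorem quasiSubsystem_bruhatLE_reverse {B₁ B₂ W₁ : Type*} [Group W₁] [Finite W₁]
    {M₁ : CoxeterMatrix B₁} {M₂ : CoxeterMatrix B₂}
    (cs₁ : CoxeterSystem M₁ W₁) {H : Subgroup W₁} (cs₂ : CoxeterSystem M₂ H)
    (hq : IsQuasiSubsystem cs₁ cs₂)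
    (hC : ∀ (x y : H) (i : B₂), cs₁.bruhatLE (x : W₁) (y : W₁) →
      cs₁.length ((cs₂.simple i * y : H) : W₁) < cs₁.length (y : W₁) →
      cs₁.length (x : W₁) < cs₁.length ((cs₂.simple i * x : H) : W₁) →
      cs₁.bruhatLE ((cs₂.simple i * x : H) : W₁) (y : W₁))
    (x y : H) (hxy : cs₁.bruhatLE (x : W₁) (y : W₁)) : cs₂.bruhatLE x y := by
  suffices h : ∀ n (x y : H), cs₁.bruhatLE (x : W₁) (y : W₁) →
      2 * cs₁.length (y : W₁) - cs₁.length (x : W₁) ≤ n → cs₂.bruhatLE x y by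
    exact h _ x y hxy le_rfl
  clear hxy x y
  intro n
  induction n using Nat.strong_induction_on with
  | _ n IH =>
  intro x y hxy hn
  by_cases hxy' : (x : W₁) = (y : W₁)
  · have hxyeq : x = y := Subtype.ext hxy'
    rw [hxyeq]
    exact QS.bruhatLE_refl cs₂ y
  · have hlt : cs₁.length (x : W₁) < cs₁.length (y : W₁) :=
      QS.bruhatLE_length_lt cs₁ hxy hxy'
    have hy1 : y ≠ (1 : H) := by
      intro h
      rw [h, OneMemClass.coe_one, cs₁.length_one] at hlt
      omega
    obtain ⟨i, hdes⟩ := cs₂.exists_leftDescent_of_ne_one hy1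
    have hdes' : cs₂.length (cs₂.simple i * y) < cs₂.length y := hdes
    have hy_add := QS.quasi_add cs₁ cs₂ hq y i hdes'
    have hspos := QS.simple_length_pos cs₁ cs₂ i
    have hy1' : cs₁.length ((cs₂.simple i * y : H) : W₁) < cs₁.length (y : W₁) := by omega
    have hnex := cs₂.length_simple_mul_ne x i
    rcases lt_or_gt_of_ne hnex with hxB | hxA
    · -- Case B : descent on x
      have hx_add := QS.quasi_add cs₁ cs₂ hq x i hxB
      obtain ⟨α, hαred, hαπ⟩ := cs₁.exists_reduced_word' ((cs₂.simple i : H) : W₁)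
      have hαlen : α.length = cs₁.length ((cs₂.simple i : H) : W₁) := by
        have h1 := hαred
        unfold CoxeterSystem.IsReduced at h1
        rw [← hαπ] at h1
        omega
      have hcoex : cs₁.wordProd α * (x : W₁) = ((cs₂.simple i * x : H) : W₁) := by
        rw [← hαπ]
        rfl
      have hcoey : cs₁.wordProd α * (y : W₁) = ((cs₂.simple i * y : H) : W₁) := by
        rw [← hαπ]
        rfl
      have hu : cs₁.length (cs₁.wordProd α * (x : W₁)) + α.length = cs₁.length (x : W₁) := by
        rw [hcoex]
        omega
      have hv : cs₁.length (cs₁.wordProd α * (y : W₁)) + α.length = cs₁.length (y : W₁) := by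
        rw [hcoey]
        omega
      have h2 := QS.bruhatLE_chain cs₁ α (x : W₁) (y : W₁) hxy hu hv
      rw [hcoex, hcoey] at h2
      have h3 := IH (2 * cs₁.length ((cs₂.simple i * y : H) : W₁) -
          cs₁.length ((cs₂.simple i * x : H) : W₁)) (by omega)
        (cs₂.simple i * x) (cs₂.simple i * y) h2 le_rfl
      have h4 : cs₂.length (cs₂.simple i * x) < cs₂.length (cs₂.simple i * (cs₂.simple i * x)) := by
        rw [cs₂.simple_mul_simple_cancel_left]
        exact hxB
      have h5 : cs₂.length (cs₂.simple i * y) < cs₂.length (cs₂.simple i * (cs₂.simple i * y)) := by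
        rw [cs₂.simple_mul_simple_cancel_left]
        exact hdes'
      have h6 := QS.bruhatLE_simple_mul_mul cs₂ i h3 h4 h5
      rwa [cs₂.simple_mul_simple_cancel_left, cs₂.simple_mul_simple_cancel_left] at h6
    · -- Case A : ascent on x
      have hx_add := QS.quasi_add' cs₁ cs₂ hq x i hxA
      have h2 := hC x y i hxy hy1' (by omega)
      have hle := QS.bruhatLE_length_le cs₁ h2
      have h3 := IH (2 * cs₁.length ((y : H) : W₁) -
          cs₁.length ((cs₂.simple i * x : H) : W₁)) (by omega)
        (cs₂.simple i * x) y h2 le_rfl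
      have h4 : cs₂.length (cs₂.simple i * (cs₂.simple i * x)) < cs₂.length (cs₂.simple i * x) := by
        rw [cs₂.simple_mul_simple_cancel_left]
        exact hxA
      have h5 := QS.bruhatLE_simple_mul_of_lt cs₂ i h3 h4
      rwa [cs₂.simple_mul_simple_cancel_left] at h5
end

section
/- Let λ ∈ V_ℂ be regular with ⟨λ,α∨⟩ = 1 for every α ∈ Θ, and let w ∈ W_λ be such that wλ is dominant. Then wΘ ⊆ Π_λ. -/
open Pointwise
open scoped RealInnerProductSpace

noncomputable section

variable {V : Type*} [NormedAddCommGroup V] [InnerProductSpace ℝ V] [FiniteDimensional ℝ V]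

/-- The coroot `α∨ = 2α/⟨α,α⟩`. -/
def coroot (α : V) : V := (2 / ⟪α, α⟫) • α

/-- The reflection `s_α` in the root `α`, as a linear automorphism of `V`
(the orthogonal reflection fixing the hyperplane orthogonal to `α`). -/
def rootRefl (α : V) : V ≃ₗ[ℝ] V :=
  (Submodule.reflection (Submodule.span ℝ {α})ᗮ).toLinearEquiv

/-- `w` is the longest element of the subgroup `H` with respect to a positive system `P`:
it lies in `H` and maps `P` onto `-P`. -/
def IsLongest (H : Subgroup (V ≃ₗ[ℝ] V)) (P : Set V) (w : V ≃ₗ[ℝ] V) : Prop :=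
  w ∈ H ∧ ⇑w '' P = (fun x => -x) '' P

open Classical in
/-- The longest element of `H` with respect to `P` (junk value `1` if there is none). -/
def longest (H : Subgroup (V ≃ₗ[ℝ] V)) (P : Set V) : V ≃ₗ[ℝ] V :=
  if h : ∃ w, IsLongest H P w then h.choose else 1

/-- The parabolic subgroup `W_Θ` generated by the reflections `s_α`, `α ∈ Θ`. -/
def parabolicSub (Θ : Set V) : Subgroup (V ≃ₗ[ℝ] V) :=
  Subgroup.closure {g | ∃ α ∈ Θ, g = rootRefl α}

/-- `a*_Θ`, the orthogonal complement of the span of `Θ`. -/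
def aTheta (Θ : Set V) : Submodule ℝ V := (Submodule.span ℝ Θ)ᗮ

/-- The orthogonal projection onto `a*_Θ`; `resTheta Θ α` is `α|_{a_Θ}`. -/
def resTheta (Θ : Set V) (v : V) : V := (Submodule.orthogonalProjectionOnto (aTheta Θ) v : V)

/-- The set of indecomposable elements of `P`: the base of a positive system `P`. -/
def baseOf (P : Set V) : Set V := {β ∈ P | ¬ ∃ γ ∈ P, ∃ δ ∈ P, β = γ + δ}

/-- Data of a root system with a chosen positive system `Δ⁺` and base `Π`. -/
structure RootData (V : Type*) [NormedAddCommGroup V] [InnerProductSpace ℝ V] where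
  roots : Set V
  pos : Set V
  base : Set V

namespace RootData

variable (R : RootData V)

/-- The axioms: `Δ` is a finite reduced crystallographic root system spanning `V`,
`Δ⁺` is a positive system with base `Π`. -/
structure IsRootSystem : Prop where
  finite : R.roots.Finite
  span_eq_top : Submodule.span ℝ R.roots = ⊤
  zero_not_mem : (0 : V) ∉ R.roots
  reduced : ∀ α ∈ R.roots, ∀ t : ℝ, t • α ∈ R.roots → t = 1 ∨ t = -1
  reflect_mem : ∀ α ∈ R.roots, ∀ β ∈ R.roots, rootRefl α β ∈ R.roots
  crystallographic : ∀ α ∈ R.roots, ∀ β ∈ R.roots, ∃ z : ℤ, (z : ℝ) = ⟪β, coroot α⟫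
  pos_subset : R.pos ⊆ R.roots
  pos_iff_neg_not_mem : ∀ α ∈ R.roots, (α ∈ R.pos ↔ -α ∉ R.pos)
  base_subset : R.base ⊆ R.pos
  base_indep : LinearIndependent ℝ ((↑) : R.base → V)
  pos_mem_closure : ∀ β ∈ R.pos, β ∈ AddSubmonoid.closure R.base

/-- The Weyl group of `Δ`, generated by the reflections in the roots. -/
def weylGroup : Subgroup (V ≃ₗ[ℝ] V) :=
  Subgroup.closure {g | ∃ α ∈ R.roots, g = rootRefl α}

/-- The set `S` of simple reflections `s_α`, `α ∈ Π`. -/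
def simpleRefls : Set (V ≃ₗ[ℝ] V) := {g | ∃ α ∈ R.base, g = rootRefl α}

/-- `ρ`, half the sum of the positive roots. -/
def rho : V := (2 : ℝ)⁻¹ • ∑ᶠ α ∈ R.pos, α

/-- `w_Θ`, the longest element of `W_Θ`. -/
def wTheta (Θ : Set V) : V ≃ₗ[ℝ] V :=
  longest (parabolicSub Θ) (R.pos ∩ (Submodule.span ℝ Θ : Set V))

/-- `ρ_Θ = (1/2)(ρ - w_Θ ρ)`. -/
def rhoTheta (Θ : Set V) : V := (2 : ℝ)⁻¹ • (R.rho - R.wTheta Θ R.rho)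

/-- `Σ_Θ = {α|_{a_Θ} : α ∈ Δ} ∖ {0}`. -/
def SigmaTheta (Θ : Set V) : Set V := (resTheta Θ '' R.roots) \ {0}

/-- `Σ_Θ⁺ = {α|_{a_Θ} : α ∈ Δ⁺} ∖ {0}`. -/
def SigmaThetaPos (Θ : Set V) : Set V := (resTheta Θ '' R.pos) \ {0}

/-- `W(Θ) = {w ∈ W : wΘ = Θ}`. -/
def Wset (Θ : Set V) : Set (V ≃ₗ[ℝ] V) := {w | w ∈ R.weylGroup ∧ ⇑w '' Θ = Θ}

/-- `Δ(α)`: the roots whose restriction to `a_Θ` is a real multiple of that of `α`. -/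
def rootsAlong (Θ : Set V) (α : V) : Set V :=
  {β ∈ R.roots | ∃ c : ℝ, resTheta Θ β = c • resTheta Θ α}

/-- `Δ⁺(α) = Δ(α) ∩ Δ⁺`. -/
def posAlong (Θ : Set V) (α : V) : Set V := R.rootsAlong Θ α ∩ R.pos

/-- `W_Θ(α)`, the Weyl group of `Δ(α)`. -/
def weylAlong (Θ : Set V) (α : V) : Subgroup (V ≃ₗ[ℝ] V) :=
  Subgroup.closure {g | ∃ β ∈ R.rootsAlong Θ α, g = rootRefl β}

/-- `σ_α = w^α w_Θ`, where `w^α` is the longest element of `W_Θ(α)`. -/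
def sigmaRefl (Θ : Set V) (α : V) : V ≃ₗ[ℝ] V :=
  longest (R.weylAlong Θ α) (R.posAlong Θ α) * R.wTheta Θ

/-- `α` is `Θ`-useful if `σ_α` has order two. -/
def IsUseful (Θ : Set V) (α : V) : Prop := orderOf (R.sigmaRefl Θ α) = 2

/-- `α` is `Θ`-reduced if `α|_{a_Θ} ≠ 0` and `α = α̃`, i.e. `α` belongs to the base `Π(α)`
of `Δ⁺(α)`. -/
def IsReducedRoot (Θ : Set V) (α : V) : Prop :=
  resTheta Θ α ≠ 0 ∧ α ∈ baseOf (R.posAlong Θ α)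

/-- `ʳᵘΔ_Θ⁺`, the set of `Θ`-reduced `Θ`-useful positive roots. -/
def ruPos (Θ : Set V) : Set V :=
  {α ∈ R.pos | R.IsReducedRoot Θ α ∧ R.IsUseful Θ α}

/-- `W(Θ)′`, the subgroup generated by the `σ_α` for `α ∈ ʳᵘΔ_Θ⁺`. -/
def WThetaPrime (Θ : Set V) : Subgroup (V ≃ₗ[ℝ] V) :=
  Subgroup.closure {g | ∃ α ∈ R.ruPos Θ, g = R.sigmaRefl Θ α}

/-- `ʳᵘΣ_Θ⁺ = {α|_{a_Θ} : α ∈ ʳᵘΔ_Θ⁺}`. -/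
def ruSigmaPos (Θ : Set V) : Set V := resTheta Θ '' R.ruPos Θ

/-- `ʳᵘΣ_Θ = ʳᵘΣ_Θ⁺ ∪ (−ʳᵘΣ_Θ⁺)`. -/
def ruSigma (Θ : Set V) : Set V := R.ruSigmaPos Θ ∪ (fun x => -x) '' R.ruSigmaPos Θ

/-- `ᵘΣ_Θ`, the set of restrictions of the `Θ`-useful roots. -/
def uSigma (Θ : Set V) : Set V := resTheta Θ '' {α ∈ R.roots | R.IsUseful Θ α}

/-- `ᵘΠ_Θ`, the base of `ʳᵘΣ_Θ⁺`. -/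
def uPi (Θ : Set V) : Set V := baseOf (R.ruSigmaPos Θ)

/-- `S(Θ) = {σ_γ : γ ∈ ᵘΠ_Θ}`. -/
def SThetaSet (Θ : Set V) : Set (V ≃ₗ[ℝ] V) :=
  {g | ∃ α ∈ R.ruPos Θ, resTheta Θ α ∈ R.uPi Θ ∧ g = R.sigmaRefl Θ α}

/-- `K(Θ) = {w ∈ W : wΘ ⊆ Π}`. -/
def Kset (Θ : Set V) : Set (V ≃ₗ[ℝ] V) := {w | w ∈ R.weylGroup ∧ ⇑w '' Θ ⊆ R.base}

/-- `Θ` is normal if every simple root outside `Θ` is `Θ`-useful. -/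
def IsNormal (Θ : Set V) : Prop := ∀ α ∈ R.base \ Θ, R.IsUseful Θ α

/-- `Θ` is seminormal. -/
def IsSeminormal (Θ : Set V) : Prop :=
  ∃ Ψ : Set V, Θ ⊆ Ψ ∧ Ψ ⊆ R.base ∧ R.uPi Θ = resTheta Θ '' (Ψ \ Θ)

/-- `ξ` is integral: `⟨ξ,α∨⟩ ∈ ℤ` for all roots `α`. -/
def IsIntegral (ξ : V) : Prop := ∀ α ∈ R.roots, ∃ z : ℤ, ⟪ξ, coroot α⟫ = (z : ℝ)

/-- `ξ` is regular: `⟨ξ,α⟩ ≠ 0` for all roots `α`. -/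
def IsRegular (ξ : V) : Prop := ∀ α ∈ R.roots, ⟪ξ, α⟫ ≠ 0

/-- `ξ` is dominant: `⟨ξ,α∨⟩ ≥ 0` for all positive roots `α`. -/
def IsDominant (ξ : V) : Prop := ∀ α ∈ R.pos, 0 ≤ ⟪ξ, coroot α⟫

end RootData

/-- The length of `w` with respect to a generating set `S`. -/
def lengthWrt {G : Type*} [Group G] (S : Set G) (w : G) : ℕ :=
  sInf {k | ∃ l : List G, (∀ s ∈ l, s ∈ S) ∧ l.prod = w ∧ l.length = k}

/-- A reduced word with letters in `S`. -/
def IsReducedWordWrt {G : Type*} [Group G] (S : Set G) (l : List G) : Prop :=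
  (∀ s ∈ l, s ∈ S) ∧ lengthWrt S l.prod = l.length

/-- The Bruhat order with respect to `S`: `x ≤ y` iff some reduced word for `y` contains
a subword which is a reduced word for `x`. -/
def bruhatLEWrt {G : Type*} [Group G] (S : Set G) (x y : G) : Prop :=
  ∃ l : List G, IsReducedWordWrt S l ∧ l.prod = y ∧
    ∃ l' : List G, l'.Sublist l ∧ IsReducedWordWrt S l' ∧ l'.prod = x

/-- `(W₂,S₂)` is a quasi subsystem of `(W₁,S₁)`: `W₂` is a subgroup of `W₁`, and for every
reduced expression `w = s₁ ⋯ s_k` in `(W₂,S₂)` one has `ℓ₁(w) = ℓ₁(s₁) + ⋯ + ℓ₁(s_k)`. -/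
def IsQuasiSubsystemWrt {G : Type*} [Group G] (W₁ W₂ : Subgroup G) (S₁ S₂ : Set G) : Prop :=
  W₂ ≤ W₁ ∧ ∀ l : List G, (∀ s ∈ l, s ∈ S₂) → lengthWrt S₂ l.prod = l.length →
    lengthWrt S₁ l.prod = (l.map (lengthWrt S₁)).sum


/-- The pairing `⟨λ,α⟩ ∈ ℂ` of an element `λ` of the complexification `V_ℂ`
(encoded as a pair (real part, imaginary part)) with a vector `α ∈ V`. -/
def cInner (lam : V × V) (α : V) : ℂ := (⟪lam.1, α⟫ : ℂ) + (⟪lam.2, α⟫ : ℂ) * Complex.I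

namespace RootData

variable (R : RootData V)

/-- `λ ∈ V_ℂ` is regular: `⟨λ,α⟩ ≠ 0` for all roots `α`. -/
def CIsRegular (lam : V × V) : Prop := ∀ α ∈ R.roots, cInner lam α ≠ 0

/-- `λ ∈ V_ℂ` is dominant: `⟨λ,α∨⟩` is not a negative integer for any positive root `α`. -/
def CIsDominant (lam : V × V) : Prop :=
  ∀ α ∈ R.pos, ¬ ∃ n : ℤ, n < 0 ∧ cInner lam (coroot α) = (n : ℂ)

/-- The set `Δ_λ` of integral roots for `λ ∈ V_ℂ`. -/
def cIntegralRoots (lam : V × V) : Set V :=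
  {α ∈ R.roots | ∃ z : ℤ, cInner lam (coroot α) = (z : ℂ)}

/-- The base `Π_λ` of the positive system `Δ⁺ ∩ Δ_λ` of `Δ_λ`. -/
def cPiLam (lam : V × V) : Set V := baseOf (R.pos ∩ R.cIntegralRoots lam)

/-- The integral Weyl group `W_λ = {w ∈ W : wλ − λ ∈ ℤΔ}` for `λ ∈ V_ℂ`. -/
def cWLam (lam : V × V) : Set (V ≃ₗ[ℝ] V) :=
  {w | w ∈ R.weylGroup ∧ w lam.1 - lam.1 ∈ Submodule.span ℤ R.roots ∧ w lam.2 = lam.2}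

end RootData

/-! ### Auxiliary lemmas -/

lemma rootRefl_apply' (α x : V) : rootRefl α x = x - ⟪x, coroot α⟫ • α := by
  show (Submodule.reflection (Submodule.span ℝ ({α} : Set V))ᗮ) x = x - ⟪x, coroot α⟫ • α
  rw [Submodule.reflection_apply, Submodule.starProjection_orthogonal_val,
    Submodule.starProjection_singleton]
  have hns : (‖α‖ ^ 2 : ℝ) = ⟪α, α⟫ := (real_inner_self_eq_norm_sq α).symm
  have : ⟪x, coroot α⟫ = 2 / ⟪α, α⟫ * ⟪x, α⟫ := by
    simp [coroot, real_inner_smul_right]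
  rw [this, hns, two_smul, real_inner_comm α x]
  simp only [RCLike.ofReal_real_eq_id, id_eq]
  match_scalars <;> ring

lemma rootRefl_inner (α x y : V) : ⟪rootRefl α x, rootRefl α y⟫ = ⟪x, y⟫ :=
  (Submodule.reflection (Submodule.span ℝ ({α} : Set V))ᗮ).inner_map_map x y

lemma rootRefl_inv (α : V) : (rootRefl α)⁻¹ = rootRefl α := by
  have : rootRefl α * rootRefl α = 1 :=
    LinearEquiv.ext fun x => Submodule.reflection_reflection _ x
  exact inv_eq_of_mul_eq_one_right this

lemma coroot_neg (α : V) : coroot (-α) = -coroot α := by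
  simp [coroot, inner_neg_neg]

namespace RootData

variable (R : RootData V)

lemma weyl_good (hR : R.IsRootSystem) {w : V ≃ₗ[ℝ] V} (hw : w ∈ R.weylGroup) :
    (∀ β ∈ R.roots, w β ∈ R.roots) ∧ (∀ β ∈ R.roots, w⁻¹ β ∈ R.roots) ∧
      ∀ x y : V, ⟪w x, w y⟫ = ⟪x, y⟫ := by
  refine Subgroup.closure_induction
    (p := fun g _ => (∀ β ∈ R.roots, g β ∈ R.roots) ∧ (∀ β ∈ R.roots, g⁻¹ β ∈ R.roots) ∧
      ∀ x y : V, ⟪g x, g y⟫ = ⟪x, y⟫) ?_ ?_ ?_ ?_ hw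
  · rintro g ⟨α, hα, rfl⟩
    refine ⟨fun β hβ => hR.reflect_mem α hα β hβ, ?_, fun x y => rootRefl_inner α x y⟩
    rw [rootRefl_inv]
    exact fun β hβ => hR.reflect_mem α hα β hβ
  · exact ⟨fun β hβ => hβ, fun β hβ => hβ, fun x y => rfl⟩
  · rintro x y hx hy ⟨hx1, hx2, hx3⟩ ⟨hy1, hy2, hy3⟩
    refine ⟨fun β hβ => hx1 _ (hy1 β hβ), fun β hβ => ?_, fun a b => ?_⟩
    · have : (x * y)⁻¹ = y⁻¹ * x⁻¹ := mul_inv_rev x y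
      rw [this]
      exact hy2 _ (hx2 β hβ)
    · exact (hx3 (y a) (y b)).trans (hy3 a b)
  · rintro x hx ⟨hx1, hx2, hx3⟩
    refine ⟨fun β hβ => hx2 β hβ, by simpa using hx1, fun a b => ?_⟩
    have := hx3 (x⁻¹ a) (x⁻¹ b)
    have ha : x (x⁻¹ a) = a := x.apply_symm_apply a
    have hb : x (x⁻¹ b) = b := x.apply_symm_apply b
    rw [ha, hb] at this
    exact this.symm

end RootData

lemma cInner_add (μ : V × V) (x y : V) : cInner μ (x + y) = cInner μ x + cInner μ y := by
  simp only [cInner, inner_add_right]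
  push_cast
  ring

lemma cInner_smul (μ : V × V) (r : ℝ) (x : V) : cInner μ (r • x) = (r : ℂ) * cInner μ x := by
  simp only [cInner, real_inner_smul_right]
  push_cast
  ring

lemma cInner_neg (μ : V × V) (x : V) : cInner μ (-x) = -cInner μ x := by
  simp only [cInner, inner_neg_right]
  push_cast
  ring

lemma cInner_sub (μ : V × V) (x y : V) : cInner μ (x - y) = cInner μ x - cInner μ y := by
  rw [sub_eq_add_neg, cInner_add, cInner_neg, sub_eq_add_neg]

lemma cInner_coroot (μ : V × V) (β : V) :
    cInner μ (coroot β) = ((2 / ⟪β, β⟫ : ℝ) : ℂ) * cInner μ β :=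
  cInner_smul μ _ β

/-- Pairing of an element of the `ℤ`-span of the roots with a coroot is an integer. -/
lemma span_int_inner (R : RootData V) (hR : R.IsRootSystem) {v : V}
    (hv : v ∈ Submodule.span ℤ R.roots) {β : V} (hβ : β ∈ R.roots) :
    ∃ z : ℤ, ⟪v, coroot β⟫ = (z : ℝ) := by
  refine Submodule.span_induction (p := fun v _ => ∃ z : ℤ, ⟪v, coroot β⟫ = (z : ℝ))
    ?_ ?_ ?_ ?_ hv
  · intro x hx
    obtain ⟨z, hz⟩ := hR.crystallographic β hβ x hx
    exact ⟨z, hz.symm⟩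
  · exact ⟨0, by simp⟩
  · rintro x y _ _ ⟨z1, hz1⟩ ⟨z2, hz2⟩
    exact ⟨z1 + z2, by rw [inner_add_left, hz1, hz2]; push_cast; ring⟩
  · rintro n x _ ⟨z, hz⟩
    refine ⟨n * z, ?_⟩
    rw [← Int.cast_smul_eq_zsmul ℝ n x, real_inner_smul_left, hz]
    push_cast
    ring

set_option maxHeartbeats 1000000 in
/-- If `λ ∈ V_ℂ` is regular with `⟨λ,α∨⟩ = 1` for all `α ∈ Θ`, and `w ∈ W_λ` is such that
`wλ` is dominant, then `wΘ ⊆ Π_λ`. -/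
theorem image_theta_subset_cPiLam (R : RootData V) (hR : R.IsRootSystem)
    (Θ : Set V) (hΘ : Θ ⊆ R.base) (hne : Θ ≠ R.base)
    (lam : V × V) (hreg : R.CIsRegular lam)
    (hone : ∀ α ∈ Θ, cInner lam (coroot α) = 1)
    (w : V ≃ₗ[ℝ] V) (hw : w ∈ R.cWLam lam)
    (hdom : R.CIsDominant (w lam.1, w lam.2)) :
    ⇑w '' Θ ⊆ R.cPiLam lam := by
  obtain ⟨hwW, hv, h2⟩ := hw
  obtain ⟨hmem, hmeminv, hinner⟩ := R.weyl_good hR hwW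
  set μ : V × V := (w lam.1, w lam.2) with hμ
  -- transfer of `cInner` along `w`
  have hFdef : ∀ v : V, cInner μ v = cInner lam (w⁻¹ v) := by
    intro v
    have hv1 : ⟪w lam.1, v⟫ = ⟪lam.1, w⁻¹ v⟫ := by
      conv_lhs => rw [← w.apply_symm_apply v]
      exact hinner lam.1 (w.symm v)
    have hv2 : ⟪w lam.2, v⟫ = ⟪lam.2, w⁻¹ v⟫ := by
      conv_lhs => rw [← w.apply_symm_apply v]
      exact hinner lam.2 (w.symm v)
    simp only [cInner, hμ, hv1, hv2]
  -- roots are nonzero and have positive self-inner product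
  have hip : ∀ β ∈ R.roots, (0:ℝ) < ⟪β, β⟫ := by
    intro β hβ
    have hβ0 : β ≠ 0 := fun h0 => hR.zero_not_mem (h0 ▸ hβ)
    rcases (real_inner_self_nonneg (x := β)).lt_or_eq with h | h
    · exact h
    · exact absurd (inner_self_eq_zero (𝕜 := ℝ).mp h.symm) hβ0
  -- regularity for μ
  have hreg' : ∀ β ∈ R.roots, cInner μ β ≠ 0 := by
    intro β hβ
    rw [hFdef]
    exact hreg _ (hmeminv β hβ)
  -- integrality transfer
  have htrans : ∀ β ∈ R.roots, ∃ z : ℤ,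
      cInner μ (coroot β) = cInner lam (coroot β) + (z : ℂ) := by
    intro β hβ
    obtain ⟨z, hz⟩ := span_int_inner R hR hv hβ
    refine ⟨z, ?_⟩
    rw [inner_sub_left] at hz
    have h1 : ⟪w lam.1, coroot β⟫ = ⟪lam.1, coroot β⟫ + (z : ℝ) := by linarith
    simp only [cInner, hμ, h2, h1]
    push_cast
    ring
  have hint1 : ∀ β ∈ R.roots, β ∈ R.cIntegralRoots lam →
      ∃ z : ℤ, cInner μ (coroot β) = (z : ℂ) := by
    intro β hβ hβi
    obtain ⟨z0, hz0⟩ := hβi.2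
    obtain ⟨z, hz⟩ := htrans β hβ
    exact ⟨z0 + z, by rw [hz, hz0]; push_cast; ring⟩
  have hint2 : ∀ β ∈ R.roots, (∃ z : ℤ, cInner μ (coroot β) = (z : ℂ)) →
      β ∈ R.cIntegralRoots lam := by
    intro β hβ ⟨z0, hz0⟩
    obtain ⟨z, hz⟩ := htrans β hβ
    refine ⟨hβ, z0 - z, ?_⟩
    rw [hz0] at hz
    push_cast
    linear_combination -hz
  -- values on positive integral roots are positive integers
  have hposM : ∀ β, β ∈ R.pos → β ∈ R.cIntegralRoots lam →
      ∃ m : ℤ, 1 ≤ m ∧ cInner μ (coroot β) = (m : ℂ) := by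
    intro β hβp hβi
    have hβ : β ∈ R.roots := hR.pos_subset hβp
    obtain ⟨z, hz⟩ := hint1 β hβ hβi
    have hz0 : z ≠ 0 := by
      intro h0
      rw [h0] at hz
      have : cInner μ (coroot β) ≠ 0 := by
        rw [cInner_coroot]
        refine mul_ne_zero ?_ (hreg' β hβ)
        have := hip β hβ
        simp only [ne_eq, Complex.ofReal_eq_zero]
        positivity
      simp at hz
      exact this (by rw [hz])
    have hznn : ¬ z < 0 := fun hlt => hdom β hβp ⟨z, hlt, hz⟩
    exact ⟨z, by omega, hz⟩
  -- now the main argument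
  rintro x ⟨θ, hθΘ, rfl⟩
  have hθbase := hΘ hθΘ
  have hθpos := hR.base_subset hθbase
  have hθroot := hR.pos_subset hθpos
  have hαroot : w θ ∈ R.roots := hmem θ hθroot
  -- ⟨μ, (wθ)∨⟩ = 1
  have hcor : coroot (w θ) = w (coroot θ) := by
    simp only [coroot, hinner θ θ, map_smul]
  have hM1 : cInner μ (coroot (w θ)) = 1 := by
    rw [hcor, hFdef]
    have : w⁻¹ (w (coroot θ)) = coroot θ := w.symm_apply_apply _
    rw [this]
    exact hone θ hθΘ
  -- wθ is positive
  have hαpos : w θ ∈ R.pos := by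
    by_contra h
    have hneg : -(w θ) ∈ R.pos := by
      by_contra hn
      exact h ((hR.pos_iff_neg_not_mem _ hαroot).mpr hn)
    refine hdom (-(w θ)) hneg ⟨-1, by norm_num, ?_⟩
    rw [coroot_neg, cInner_neg, hM1]
    norm_num
  -- wθ is integral
  have hαint : w θ ∈ R.cIntegralRoots lam :=
    hint2 _ hαroot ⟨1, by rw [hM1]; norm_num⟩
  refine ⟨⟨hαpos, hαint⟩, ?_⟩
  -- indecomposability
  rintro ⟨γ, hγP, δ, hδP, hsum⟩
  have hγpos : γ ∈ R.pos := hγP.1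
  have hδpos : δ ∈ R.pos := hδP.1
  have hγroot : γ ∈ R.roots := hR.pos_subset hγpos
  have hδroot : δ ∈ R.roots := hR.pos_subset hδpos
  obtain ⟨m, hm1, hMγ⟩ := hposM γ hγpos hγP.2
  obtain ⟨n, hn1, hMδ⟩ := hposM δ hδpos hδP.2
  rw [hsum] at hαroot hM1
  have hg : (0:ℝ) < ⟪γ, γ⟫ := hip γ hγroot
  have hd : (0:ℝ) < ⟪δ, δ⟫ := hip δ hδroot
  have hS : ⟪γ + δ, γ + δ⟫ = ⟪γ, γ⟫ + 2 * ⟪γ, δ⟫ + ⟪δ, δ⟫ := real_inner_add_add_self γ δ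
  have hSpos : (0:ℝ) < ⟪γ + δ, γ + δ⟫ := hip _ hαroot
  -- complex values of cInner on γ, δ, γ+δ
  have hgC : (⟪γ, γ⟫ : ℂ) ≠ 0 := by exact_mod_cast hg.ne'
  have hdC : (⟪δ, δ⟫ : ℂ) ≠ 0 := by exact_mod_cast hd.ne'
  have hSC : (⟪γ + δ, γ + δ⟫ : ℂ) ≠ 0 := by exact_mod_cast hSpos.ne'
  rw [cInner_coroot] at hMγ hMδ hM1
  push_cast at hMγ hMδ hM1
  have hFγ : cInner μ γ = (m : ℂ) * (⟪γ, γ⟫ : ℝ) / 2 := by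
    field_simp at hMγ
    linear_combination hMγ / 2
  have hFδ : cInner μ δ = (n : ℂ) * (⟪δ, δ⟫ : ℝ) / 2 := by
    field_simp at hMδ
    linear_combination hMδ / 2
  have hFS : cInner μ (γ + δ) = ((⟪γ + δ, γ + δ⟫ : ℝ) : ℂ) / 2 := by
    field_simp at hM1
    linear_combination hM1 / 2
  -- the basic real equation
  have hEC : ((⟪γ + δ, γ + δ⟫ : ℝ) : ℂ) = ((m : ℝ) * ⟪γ, γ⟫ + (n : ℝ) * ⟪δ, δ⟫ : ℝ) := by
    have := cInner_add μ γ δ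
    rw [hFγ, hFδ, hFS] at this
    push_cast
    linear_combination 2 * this
  have hE : ⟪γ + δ, γ + δ⟫ = (m : ℝ) * ⟪γ, γ⟫ + (n : ℝ) * ⟪δ, δ⟫ := by exact_mod_cast hEC
  have hmR : (1:ℝ) ≤ (m:ℝ) := by exact_mod_cast hm1
  have hnR : (1:ℝ) ≤ (n:ℝ) := by exact_mod_cast hn1
  have hc : 2 * ⟪γ, δ⟫ = ((m:ℝ) - 1) * ⟪γ, γ⟫ + ((n:ℝ) - 1) * ⟪δ, δ⟫ := by linarith
  have hcnn : (0:ℝ) ≤ ⟪γ, δ⟫ := by nlinarith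
  -- crystallographic: ⟨γ,(γ+δ)∨⟩ and ⟨δ,(γ+δ)∨⟩ are positive integers summing to 2
  obtain ⟨a, ha⟩ := hR.crystallographic (γ + δ) hαroot γ hγroot
  obtain ⟨b, hb⟩ := hR.crystallographic (γ + δ) hαroot δ hδroot
  have ha' : (a : ℝ) = 2 / ⟪γ + δ, γ + δ⟫ * (⟪γ, γ⟫ + ⟪γ, δ⟫) := by
    rw [ha]
    simp [coroot, real_inner_smul_right, inner_add_right]
    ring
  have hb' : (b : ℝ) = 2 / ⟪γ + δ, γ + δ⟫ * (⟪γ, δ⟫ + ⟪δ, δ⟫) := by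
    rw [hb]
    simp [coroot, real_inner_smul_right, inner_add_right, real_inner_comm δ γ]
    ring
  have habR : (a : ℝ) + (b : ℝ) = 2 := by
    rw [ha', hb']
    field_simp
    linarith
  have hab : a + b = 2 := by exact_mod_cast habR
  have hapos : 0 < a := by
    have : (0:ℝ) < (a:ℝ) := by
      rw [ha']
      have h1 : (0:ℝ) < 2 / ⟪γ + δ, γ + δ⟫ := by positivity
      nlinarith
    exact_mod_cast this
  have hbpos : 0 < b := by
    have : (0:ℝ) < (b:ℝ) := by
      rw [hb']
      have h1 : (0:ℝ) < 2 / ⟪γ + δ, γ + δ⟫ := by positivity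
      nlinarith
    exact_mod_cast this
  have ha1 : a = 1 := by omega
  -- hence the two roots have the same length
  have hgd : ⟪δ, δ⟫ = ⟪γ, γ⟫ := by
    rw [ha1] at ha'
    have h1 : ⟪γ + δ, γ + δ⟫ = 2 * (⟪γ, γ⟫ + ⟪γ, δ⟫) := by
      field_simp at ha'
      push_cast at ha'
      linarith
    linarith
  have hc2 : 2 * ⟪γ, δ⟫ = ((m:ℝ) + (n:ℝ) - 2) * ⟪γ, γ⟫ := by
    rw [hgd] at hc
    linarith
  -- case analysis on m + n
  rcases lt_or_ge (m + n) 4 with hk | hk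
  · -- m + n ≤ 3, so m = 1 or n = 1 : use a reflected root pairing to zero with μ
    have hSval : ⟪γ + δ, γ + δ⟫ = ((m:ℝ) + (n:ℝ)) * ⟪γ, γ⟫ := by
      rw [hgd] at hS
      linarith
    rcases (by omega : m = 1 ∨ n = 1) with h1 | h1
    · -- reflect in γ
      have hηroot : rootRefl γ (γ + δ) ∈ R.roots := hR.reflect_mem γ hγroot (γ + δ) hαroot
      have hpair : ⟪γ + δ, coroot γ⟫ = (m:ℝ) + (n:ℝ) := by
        have e1 : ⟪γ + δ, coroot γ⟫ = 2 / ⟪γ, γ⟫ * (⟪γ, γ⟫ + ⟪γ, δ⟫) := by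
          simp only [coroot, real_inner_smul_right, inner_add_left, real_inner_comm δ γ]
          ring
        rw [e1]
        field_simp
        linarith [hc2]
      have h0 : cInner μ (rootRefl γ (γ + δ)) = 0 := by
        rw [rootRefl_apply', cInner_sub, cInner_smul, hpair, hFS, hFγ, hSval, h1]
        push_cast
        ring
      exact hreg' _ hηroot h0
    · -- reflect in δ
      have hηroot : rootRefl δ (γ + δ) ∈ R.roots := hR.reflect_mem δ hδroot (γ + δ) hαroot
      have hpair : ⟪γ + δ, coroot δ⟫ = (m:ℝ) + (n:ℝ) := by
        have e1 : ⟪γ + δ, coroot δ⟫ = 2 / ⟪δ, δ⟫ * (⟪γ, δ⟫ + ⟪δ, δ⟫) := by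
          simp only [coroot, real_inner_smul_right, inner_add_left]
          ring
        rw [e1, hgd]
        field_simp
        linarith [hc2]
      have h0 : cInner μ (rootRefl δ (γ + δ)) = 0 := by
        rw [rootRefl_apply', cInner_sub, cInner_smul, hpair, hFS, hFδ, hSval, hgd, h1]
        push_cast
        ring
      exact hreg' _ hηroot h0
  · rcases eq_or_lt_of_le hk with h4 | h5
    · -- m + n = 4 : then γ = δ and γ + δ = 2γ is not reduced
      have h4R : (m:ℝ) + (n:ℝ) = 4 := by exact_mod_cast h4.symm
      have hγδ : γ = δ := by
        have hz : ⟪γ - δ, γ - δ⟫ = 0 := by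
          rw [real_inner_sub_sub_self]
          have e : ((m:ℝ) + (n:ℝ) - 2) = 2 := by linarith
          rw [e] at hc2
          rw [hgd]
          linarith
        have := (inner_self_eq_zero (𝕜 := ℝ)).mp hz
        exact sub_eq_zero.mp this
      have h2γ : (2:ℝ) • γ ∈ R.roots := by
        have : γ + δ = (2:ℝ) • γ := by
          rw [← hγδ, two_smul]
        rw [← this]
        exact hαroot
      rcases hR.reduced γ hγroot 2 h2γ with h | h <;> norm_num at h
    · -- m + n ≥ 5 : ⟪γ-δ,γ-δ⟫ < 0, impossible
      have h5R : (5:ℝ) ≤ (m:ℝ) + (n:ℝ) := by exact_mod_cast h5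
      have hnn := real_inner_self_nonneg (x := γ - δ)
      rw [real_inner_sub_sub_self] at hnn
      rw [hgd] at hnn
      nlinarith

end
end

section
/- Let S be a nonempty subset of {1,…,n} and let f₁, f₂ : {1,…,n} → ℝ be functions that agree at every point of {1,…,n} ∖ S. Then f₁ ⊴ f₂ (with respect to the ordered set T = {1,…,n}) if and only if f₁|_S ⊴ f₂|_S (with respect to the ordered set T = S). -/
/-- `g` is the decreasing rearrangement `f*` of `f` on the finite set `T`:
`g = τf` for some permutation `τ` of `T` (acting by `(τf)(t) = f(τ⁻¹ t)`), and `g` is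
decreasing on `T`. (Values outside `T` are irrelevant.) -/
def IsDecRearrangeOn (T : Finset ℕ) (f g : ℕ → ℝ) : Prop :=
  (∃ τ : {x // x ∈ T} ≃ {x // x ∈ T}, ∀ t : {x // x ∈ T}, g t = f (τ.symm t)) ∧
  (∀ s ∈ T, ∀ t ∈ T, s ≤ t → g t ≤ g s)

/-- `f₁ ⪯ f₂` on `T`: `f₁*(t) ≤ f₂*(t)` for all `t ∈ T`, where `f*` denotes the
decreasing rearrangement on `T`. -/
def PrecOn (T : Finset ℕ) (f₁ f₂ : ℕ → ℝ) : Prop :=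
  ∀ g₁ g₂ : ℕ → ℝ, IsDecRearrangeOn T f₁ g₁ → IsDecRearrangeOn T f₂ g₂ →
    ∀ t ∈ T, g₁ t ≤ g₂ t

/-- `T_r = {t₁, …, t_r}`, the set of the `r` smallest elements of `T`. -/
def initialSeg (T : Finset ℕ) (r : ℕ) : Finset ℕ := ((T.sort (· ≤ ·)).take r).toFinset

/-- `f₁ ⊴ f₂` on `T`: `f₁|_{T_r} ⪯ f₂|_{T_r}` for all `1 ≤ r ≤ card T`. -/
def TriangleOn (T : Finset ℕ) (f₁ f₂ : ℕ → ℝ) : Prop :=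
  ∀ r : ℕ, 1 ≤ r → r ≤ T.card → PrecOn (initialSeg T r) f₁ f₂

/-! ### Auxiliary counting lemmas -/

/-- If positions `0..i` of `l` all satisfy `p`, then `countP p l ≥ i+1`. -/
lemma claimA {α : Type*} (p : α → Bool) (l : List α) (i : ℕ) (hi : i < l.length)
    (h : ∀ j (hj : j < l.length), j ≤ i → p l[j]) : i + 1 ≤ l.countP p := by
  have hsplit : l.countP p = (l.take (i+1)).countP p + (l.drop (i+1)).countP p := by
    rw [← List.countP_append, List.take_append_drop]
  have hall : (l.take (i+1)).countP p = (l.take (i+1)).length :=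
    List.countP_eq_length.mpr (by
      intro a ha
      obtain ⟨j, hj, rfl⟩ := List.getElem_of_mem ha
      rw [List.getElem_take]
      exact h j (by simp at hj; omega) (by simp at hj; omega))
  have hlen : (l.take (i+1)).length = i + 1 := by simp; omega
  omega

/-- If positions `≥ i` of `l` all fail `p`, then `countP p l ≤ i`. -/
lemma claimB {α : Type*} (p : α → Bool) (l : List α) (i : ℕ)
    (h : ∀ j (hj : j < l.length), i ≤ j → ¬ p l[j]) : l.countP p ≤ i := by
  have hsplit : l.countP p = (l.take i).countP p + (l.drop i).countP p := by
    rw [← List.countP_append, List.take_append_drop]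
  have h0 : (l.drop i).countP p = 0 :=
    List.countP_eq_zero.mpr (by
      intro a ha
      obtain ⟨j, hj, rfl⟩ := List.getElem_of_mem ha
      rw [List.getElem_drop]
      exact h (i+j) (by simp at hj; omega) (by omega))
  have := List.countP_le_length (p := p) (l := l.take i)
  have : (l.take i).length ≤ i := by simp
  omega

/-- In a `≥`-sorted (decreasing) list, `l[j] ≤ l[i]` for `i ≤ j`. -/
lemma sorted_ge_getElem {l : List ℝ} (hl : l.Pairwise (· ≥ ·)) {i j : ℕ}
    (hj : j < l.length) (hij : i ≤ j) : l[j] ≤ l[i]'(lt_of_le_of_lt hij hj) := by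
  rcases eq_or_lt_of_le hij with rfl | hlt
  · exact le_refl _
  · exact List.pairwise_iff_getElem.mp hl i j _ hj hlt

/-! ### The decreasing rearrangement -/

/-- the multiset of values of `f` on `T`, sorted decreasingly -/
noncomputable def dsort (T : Finset ℕ) (f : ℕ → ℝ) : List ℝ :=
  Multiset.sort (T.val.map f) (· ≥ ·)

lemma exists_decRearrange (T : Finset ℕ) (f : ℕ → ℝ) : ∃ g, IsDecRearrangeOn T f g := by
  classical
  set e : Fin T.card ≃o {x // x ∈ T} := T.orderIsoOfFin rfl with he
  set σ : Equiv.Perm (Fin T.card) := Tuple.sort (fun i => -(f (e i))) with hσ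
  refine ⟨fun t => if ht : t ∈ T then f (e (σ (e.symm ⟨t, ht⟩))) else 0, ?_, ?_⟩
  · refine ⟨(e.toEquiv.symm.trans (σ.trans e.toEquiv)).symm, ?_⟩
    intro t
    simp only [Equiv.symm_symm, Equiv.trans_apply, RelIso.coe_fn_toEquiv]
    rw [dif_pos t.2]
    congr
  · intro s hs t ht hst
    simp only [dif_pos hs, dif_pos ht]
    have hmono := Tuple.monotone_sort (fun i => -(f (e i)))
    have h1 : e.symm ⟨s, hs⟩ ≤ e.symm ⟨t, ht⟩ := e.symm.monotone (by exact hst)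
    have := hmono h1
    simp only [Function.comp_apply, neg_le_neg_iff] at this
    linarith

lemma map_vals_eq {T : Finset ℕ} {f g : ℕ → ℝ}
    (τ : {x // x ∈ T} ≃ {x // x ∈ T}) (hτ : ∀ t : {x // x ∈ T}, g t = f (τ.symm t)) :
    T.val.map g = T.val.map f := by
  have key : ∀ h : ℕ → ℝ, T.val.map h
      = Multiset.map (fun t : {x // x ∈ T} => h ↑t) (Finset.univ : Finset {x // x ∈ T}).val := by
    intro h
    rw [← Finset.attach_eq_univ, Finset.attach_val]
    exact (Multiset.attach_map_val' T.val h).symm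
  rw [key g, key f]
  calc Multiset.map (fun t : {x // x ∈ T} => g ↑t) Finset.univ.val
      = Multiset.map (fun t : {x // x ∈ T} => f ↑(τ.symm t)) Finset.univ.val :=
        Multiset.map_congr rfl (fun t _ => hτ t)
    _ = Multiset.map (fun t : {x // x ∈ T} => f ↑t) (Multiset.map τ.symm Finset.univ.val) := by
        rw [Multiset.map_map]; rfl
    _ = Multiset.map (fun t : {x // x ∈ T} => f ↑t) Finset.univ.val := by
        rw [show Multiset.map ⇑τ.symm Finset.univ.val = Finset.univ.val from
          congrArg Finset.val (Finset.map_univ_equiv τ.symm)]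

lemma decRearrange_sort_eq {T : Finset ℕ} {f g : ℕ → ℝ} (hg : IsDecRearrangeOn T f g) :
    (T.sort (· ≤ ·)).map g = dsort T f := by
  obtain ⟨⟨τ, hτ⟩, hdec⟩ := hg
  refine (fun hp hs => List.Perm.eq_of_pairwise' (r := (· ≥ ·)) hs (Multiset.pairwise_sort _ _) hp) ?_ ?_
  · have h1 : (((T.sort (· ≤ ·)).map g : List ℝ) : Multiset ℝ) = T.val.map g := by
      rw [← Multiset.map_coe, Finset.sort_eq]
    have h2 : ((dsort T f : List ℝ) : Multiset ℝ) = T.val.map f := Multiset.sort_eq _ _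
    exact Quotient.exact (h1.trans ((map_vals_eq τ hτ).trans h2.symm))
  · rw [List.pairwise_map]
    refine List.Pairwise.imp_of_mem ?_ (T.pairwise_sort (· ≤ ·))
    intro a b ha hb hab
    exact hdec a ((Finset.mem_sort _).mp ha) b ((Finset.mem_sort _).mp hb) hab

lemma length_dsort (T : Finset ℕ) (f : ℕ → ℝ) : (dsort T f).length = T.card := by
  rw [dsort, Multiset.length_sort, Multiset.card_map]
  rfl

lemma countP_dsort (T : Finset ℕ) (f : ℕ → ℝ) (x : ℝ) :
    (dsort T f).countP (fun v => decide (x < v))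
      = (T.sort (· ≤ ·)).countP (fun t => decide (x < f t)) := by
  have h1 : ((dsort T f : List ℝ) : Multiset ℝ) = T.val.map f := Multiset.sort_eq _ _
  have h2 : (((T.sort (· ≤ ·)) : List ℕ) : Multiset ℕ) = T.val := Finset.sort_eq _ _
  have := congrArg (Multiset.countP (fun v => x < v)) h1
  rw [Multiset.coe_countP] at this
  rw [this, ← h2, Multiset.map_coe, Multiset.coe_countP, List.countP_map]
  rfl

lemma dsorted (T : Finset ℕ) (f : ℕ → ℝ) : (dsort T f).Pairwise (· ≥ ·) :=
  Multiset.pairwise_sort _ _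

/-! ### `PrecOn` via counts -/

lemma precOn_iff (T : Finset ℕ) (f₁ f₂ : ℕ → ℝ) :
    PrecOn T f₁ f₂ ↔ ∀ x : ℝ,
      (T.sort (· ≤ ·)).countP (fun t => decide (x < f₁ t))
        ≤ (T.sort (· ≤ ·)).countP (fun t => decide (x < f₂ t)) := by
  have hlen1 : (dsort T f₁).length = T.card := length_dsort T f₁
  have hlen2 : (dsort T f₂).length = T.card := length_dsort T f₂
  have hslen : (T.sort (· ≤ ·)).length = T.card := Finset.length_sort _
  constructor
  · intro h x
    obtain ⟨g₁, hg₁⟩ := exists_decRearrange T f₁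
    obtain ⟨g₂, hg₂⟩ := exists_decRearrange T f₂
    have e₁ := decRearrange_sort_eq hg₁
    have e₂ := decRearrange_sort_eq hg₂
    have hpt : ∀ i (hi : i < T.card),
        (dsort T f₁)[i]'(by omega) ≤ (dsort T f₂)[i]'(by omega) := by
      intro i hi
      rw [← List.getElem_of_eq e₁ (by rw [List.length_map]; omega),
          ← List.getElem_of_eq e₂ (by rw [List.length_map]; omega)]
      simp only [List.getElem_map]
      exact h g₁ g₂ hg₁ hg₂ _ ((Finset.mem_sort _).mp (List.getElem_mem _))
    rw [← countP_dsort, ← countP_dsort]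
    set k := (dsort T f₂).countP (fun v => decide (x < v)) with hk
    apply claimB
    intro j hj hkj
    simp only [decide_eq_true_eq, not_lt]
    by_contra hc
    push_neg at hc
    have hj2 : j < (dsort T f₂).length := by omega
    have : j + 1 ≤ k := by
      rw [hk]
      apply claimA _ _ j hj2
      intro j' hj' hj'j
      simp only [decide_eq_true_eq]
      have : (dsort T f₂)[j] ≤ (dsort T f₂)[j'] := sorted_ge_getElem (dsorted T f₂) hj2 hj'j
      have hle := hpt j (by omega)
      linarith
    omega
  · intro h g₁ g₂ hg₁ hg₂ t ht
    have e₁ := decRearrange_sort_eq hg₁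
    have e₂ := decRearrange_sort_eq hg₂
    have htl : t ∈ T.sort (· ≤ ·) := (Finset.mem_sort _).mpr ht
    obtain ⟨i, hi, hit⟩ := List.getElem_of_mem htl
    have hv1 : g₁ t = (dsort T f₁)[i]'(by omega) := by
      rw [← List.getElem_of_eq e₁ (by rw [List.length_map]; omega), List.getElem_map, hit]
    have hv2 : g₂ t = (dsort T f₂)[i]'(by omega) := by
      rw [← List.getElem_of_eq e₂ (by rw [List.length_map]; omega), List.getElem_map, hit]
    rw [hv1, hv2]
    by_contra hc
    push_neg at hc
    set x := (dsort T f₂)[i]'(by omega) with hxdef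
    have hcount1 : i + 1 ≤ (dsort T f₁).countP (fun v => decide (x < v)) := by
      apply claimA _ _ i (by omega)
      intro j hj hji
      simp only [decide_eq_true_eq]
      have : (dsort T f₁)[i]'(by omega) ≤ (dsort T f₁)[j] :=
        sorted_ge_getElem (dsorted T f₁) (by omega) hji
      linarith
    have hcount2 : (dsort T f₂).countP (fun v => decide (x < v)) ≤ i := by
      apply claimB
      intro j hj hij
      simp only [decide_eq_true_eq, not_lt]
      exact sorted_ge_getElem (dsorted T f₂) hj hij
    have := h x
    rw [← countP_dsort, ← countP_dsort] at this
    omega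

/-! ### `initialSeg` lemmas -/

lemma lt_countP_iff {l : List ℕ} (hss : l.Pairwise (· < ·)) (m : ℕ) {j : ℕ} (hj : j < l.length) :
    j < l.countP (fun t => decide (t ≤ m)) ↔ l[j] ≤ m := by
  have hmono : ∀ i j (hj : j < l.length) (hij : i ≤ j), l[i]'(lt_of_le_of_lt hij hj) ≤ l[j] := by
    intro i j hj hij
    rcases eq_or_lt_of_le hij with rfl | hlt
    · exact le_refl _
    · exact le_of_lt (List.pairwise_iff_getElem.mp hss i j (by omega) hj hlt)
  constructor
  · intro hjk
    by_contra hc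
    push_neg at hc
    have : l.countP (fun t => decide (t ≤ m)) ≤ j := by
      apply claimB
      intro j' hj' hjj'
      simp only [decide_eq_true_eq, not_le]
      exact lt_of_lt_of_le hc (hmono j j' hj' hjj')
    omega
  · intro hle
    have : j + 1 ≤ l.countP (fun t => decide (t ≤ m)) := by
      apply claimA _ _ j hj
      intro j' hj' hjj'
      simp only [decide_eq_true_eq]
      exact le_trans (hmono j' j hj hjj') hle
    omega

lemma mem_take' {l : List ℕ} {k t : ℕ} :
    t ∈ l.take k ↔ ∃ j, ∃ (hj : j < l.length), j < k ∧ l[j] = t := by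
  constructor
  · intro ht
    obtain ⟨j, hj, hjt⟩ := List.getElem_of_mem ht
    rw [List.getElem_take] at hjt
    exact ⟨j, by simp at hj; omega, by simp at hj; omega, hjt⟩
  · rintro ⟨j, hj, hjk, rfl⟩
    have h1 : j < (l.take k).length := by simp; omega
    have := List.getElem_mem h1
    rwa [List.getElem_take] at this

/-- The initial segment of `T` of length `countP (· ≤ m)` is `T.filter (· ≤ m)`. -/
lemma initialSeg_countP (T : Finset ℕ) (m : ℕ) :
    initialSeg T ((T.sort (· ≤ ·)).countP (fun t => decide (t ≤ m))) = T.filter (· ≤ m) := by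
  ext t
  rw [initialSeg, List.mem_toFinset, mem_take', Finset.mem_filter]
  constructor
  · rintro ⟨j, hj, hjk, rfl⟩
    exact ⟨(Finset.mem_sort _).mp (List.getElem_mem hj),
      (lt_countP_iff (Finset.sortedLT_sort T).pairwise m hj).mp hjk⟩
  · rintro ⟨htT, htm⟩
    obtain ⟨j, hj, hjt⟩ := List.getElem_of_mem ((Finset.mem_sort (· ≤ ·)).mpr htT)
    exact ⟨j, hj, (lt_countP_iff (Finset.sortedLT_sort T).pairwise m hj).mpr (hjt ▸ htm), hjt⟩

/-- For `1 ≤ r ≤ card T`, `initialSeg T r = T.filter (· ≤ m)` where `m ∈ T`. -/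
lemma initialSeg_eq_filter (T : Finset ℕ) (r : ℕ) (hr1 : 1 ≤ r) (hr2 : r ≤ T.card) :
    ∃ m ∈ T, initialSeg T r = T.filter (· ≤ m) := by
  have hlen : (T.sort (· ≤ ·)).length = T.card := Finset.length_sort _
  have hr : r - 1 < (T.sort (· ≤ ·)).length := by omega
  set m := (T.sort (· ≤ ·))[r-1] with hm
  refine ⟨m, (Finset.mem_sort _).mp (List.getElem_mem hr), ?_⟩
  have hcount : (T.sort (· ≤ ·)).countP (fun t => decide (t ≤ m)) = r := by
    have h1 : r - 1 < (T.sort (· ≤ ·)).countP (fun t => decide (t ≤ m)) :=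
      (lt_countP_iff (Finset.sortedLT_sort T).pairwise m hr).mpr (le_refl _)
    have h2 : (T.sort (· ≤ ·)).countP (fun t => decide (t ≤ m)) ≤ r := by
      apply claimB
      intro j hj hrj
      simp only [decide_eq_true_eq, not_le]
      exact List.pairwise_iff_getElem.mp (Finset.sortedLT_sort T).pairwise (r-1) j hr hj (by omega)
    omega
  rw [← hcount, initialSeg_countP]

/-! ### Counts as filter cards -/

lemma countP_sort_eq_card_filter (T : Finset ℕ) (p : ℕ → Prop) [DecidablePred p] :
    (T.sort (· ≤ ·)).countP (fun t => decide (p t)) = (T.filter p).card := by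
  rw [← Multiset.coe_countP, Finset.sort_eq]
  rw [Multiset.countP_eq_card_filter, ← Finset.filter_val]
  rfl

lemma card_filter_decomp (B S : Finset ℕ) (p : ℕ → Prop) [DecidablePred p] :
    (B.filter p).card = ((B ∩ S).filter p).card + ((B \ S).filter p).card := by
  classical
  have h := Finset.card_filter_add_card_filter_not
    (s := B.filter p) (p := fun t => t ∈ S)
  have h1 : (B.filter p).filter (fun t => t ∈ S) = (B ∩ S).filter p := by
    ext t; simp [Finset.mem_filter, Finset.mem_inter]; tauto
  have h2 : (B.filter p).filter (fun t => t ∉ S) = (B \ S).filter p := by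
    ext t; simp [Finset.mem_filter, Finset.mem_sdiff]; tauto
  rw [h1, h2] at h
  omega

lemma precOn_card (X : Finset ℕ) (h₁ h₂ : ℕ → ℝ) : PrecOn X h₁ h₂ ↔
    ∀ x : ℝ, (X.filter (fun t => x < h₁ t)).card ≤ (X.filter (fun t => x < h₂ t)).card := by
  rw [precOn_iff]
  constructor
  · intro h x
    rw [← countP_sort_eq_card_filter, ← countP_sort_eq_card_filter]
    exact h x
  · intro h x
    rw [countP_sort_eq_card_filter, countP_sort_eq_card_filter]
    exact h x

lemma initialSeg_Icc (n r : ℕ) (hr1 : 1 ≤ r) (hr2 : r ≤ n) :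
    initialSeg (Finset.Icc 1 n) r = Finset.Icc 1 r := by
  have h1 : ((Finset.Icc 1 n).sort (· ≤ ·)).countP (fun t => decide (t ≤ r)) = r := by
    rw [countP_sort_eq_card_filter]
    have h2 : (Finset.Icc 1 n).filter (· ≤ r) = Finset.Icc 1 r := by
      ext t; simp [Finset.mem_Icc, Finset.mem_filter]; omega
    rw [h2, Nat.card_Icc]; omega
  have h3 := initialSeg_countP (Finset.Icc 1 n) r
  rw [h1] at h3
  rw [h3]
  ext t; simp [Finset.mem_Icc, Finset.mem_filter]; omega

/-- Lemma 7.3.1: if `f₁` and `f₂` agree off `S ⊆ {1,…,n}`, then `f₁ ⊴ f₂` on `{1,…,n}` iff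
`f₁|_S ⊴ f₂|_S` on `S`. -/
theorem triangleOn_iff_of_agree_off (n : ℕ) (S : Finset ℕ)
    (hS : S ⊆ Finset.Icc 1 n) (hSne : S.Nonempty)
    (f₁ f₂ : ℕ → ℝ) (hagree : ∀ t ∈ Finset.Icc 1 n \ S, f₁ t = f₂ t) :
    TriangleOn (Finset.Icc 1 n) f₁ f₂ ↔ TriangleOn S f₁ f₂ := by
  classical
  have hcardIcc : (Finset.Icc 1 n).card = n := by rw [Nat.card_Icc]; omega
  have hagree_filter : ∀ (B : Finset ℕ), B ⊆ Finset.Icc 1 n → ∀ x : ℝ,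
      ((B \ S).filter (fun t => x < f₁ t)).card = ((B \ S).filter (fun t => x < f₂ t)).card := by
    intro B hB x
    congr 1
    apply Finset.filter_congr
    intro t ht
    have htn : t ∈ Finset.Icc 1 n \ S := by
      rw [Finset.mem_sdiff] at ht ⊢
      exact ⟨hB ht.1, ht.2⟩
    rw [hagree t htn]
  constructor
  · -- T direction ⇒ S direction
    intro hT r hr1 hr2
    obtain ⟨m, hmS, hseg⟩ := initialSeg_eq_filter S r hr1 hr2
    have hm : 1 ≤ m ∧ m ≤ n := Finset.mem_Icc.mp (hS hmS)
    have hSm : S.filter (· ≤ m) = (Finset.Icc 1 m) ∩ S := by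
      ext s
      simp only [Finset.mem_filter, Finset.mem_inter, Finset.mem_Icc]
      constructor
      · rintro ⟨hs1, hs2⟩
        exact ⟨⟨(Finset.mem_Icc.mp (hS hs1)).1, hs2⟩, hs1⟩
      · tauto
    rw [hseg, precOn_card]
    intro x
    have hTm := hT m hm.1 (by omega)
    rw [initialSeg_Icc n m hm.1 hm.2, precOn_card] at hTm
    have key := hTm x
    rw [card_filter_decomp (Finset.Icc 1 m) S (fun t => x < f₁ t),
        card_filter_decomp (Finset.Icc 1 m) S (fun t => x < f₂ t),
        hagree_filter (Finset.Icc 1 m) (Finset.Icc_subset_Icc le_rfl hm.2) x] at key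
    rw [hSm]
    omega
  · -- S direction ⇒ T direction
    intro hS' r hr1 hr2
    rw [hcardIcc] at hr2
    rw [initialSeg_Icc n r hr1 hr2, precOn_card]
    intro x
    rw [card_filter_decomp (Finset.Icc 1 r) S (fun t => x < f₁ t),
        card_filter_decomp (Finset.Icc 1 r) S (fun t => x < f₂ t),
        hagree_filter (Finset.Icc 1 r) (Finset.Icc_subset_Icc le_rfl hr2) x]
    have hIS : Finset.Icc 1 r ∩ S = S.filter (· ≤ r) := by
      ext s
      simp only [Finset.mem_filter, Finset.mem_inter, Finset.mem_Icc]
      constructor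
      · tauto
      · rintro ⟨hs1, hs2⟩
        exact ⟨⟨(Finset.mem_Icc.mp (hS hs1)).1, hs2⟩, hs1⟩
    rw [hIS]
    set k := (S.filter (· ≤ r)).card with hkdef
    by_cases hk : k = 0
    · have hempty : S.filter (· ≤ r) = ∅ := Finset.card_eq_zero.mp hk
      rw [hempty]
      simp
    · have hk1 : 1 ≤ k := by omega
      have hk2 : k ≤ S.card := Finset.card_filter_le _ _
      have hkcount : (S.sort (· ≤ ·)).countP (fun t => decide (t ≤ r)) = k :=
        countP_sort_eq_card_filter S (· ≤ r)
      have hPk := hS' k hk1 hk2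
      rw [show initialSeg S k = S.filter (· ≤ r) from by
            rw [← hkcount]; exact initialSeg_countP S r,
          precOn_card] at hPk
      have := hPk x
      omega
end
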